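/- arXiv:1011.3507 — 5 statements merged into one kernel-verified Lean document; each statement's English description precedes it below -/
import Mathlib

section
/- Let C be a triangulated category carrying a bounded weight structure w and a bounded t-structure t satisfying condition (iv) of Theorem 1.1 (for every X ∈ Heart(t) and every i ∈ ℤ there exists a nice weight decomposition of X at level i). Let W_{≤i} : Heart(t) → Heart(t) denote the right adjoint to the inclusion of the full subcategory of Heart(t) on objects of C^{w≤i}, and set W_{≥i}X := X / W_{≤i−1}X. Then, for every i ∈ ℤ, the functors Gr_i : X ↦ W_{≥i}(W_{≤i}X) and Gr_i' : X ↦ W_{≤i}(W_{≥i}X) are isomorphic exact endofunctors of Heart(t); they take their values in the full subcategory A_i := Heart(t) ∩ C^{w=i} and restrict to the identity on A_i; moreover Gr_i(X) ≅ W_{≤i}X / W_{≤i−1}X naturally in X. -/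
open CategoryTheory CategoryTheory.Limits CategoryTheory.Pretriangulated

universe v u

namespace WT

variable (C : Type u) [Category.{v} C] [Preadditive C] [HasZeroObject C]
  [HasShift C ℤ] [∀ n : ℤ, (shiftFunctor C n).Additive] [Pretriangulated C]

/-- `D ⊥ E`: every morphism from an object of `D` to an object of `E` vanishes. -/
def Perp (D E : Set C) : Prop :=
  ∀ ⦃X : C⦄, X ∈ D → ∀ ⦃Y : C⦄, Y ∈ E → ∀ f : X ⟶ Y, f = 0

/-- The shift `D[n]` of a class of objects: objects isomorphic to `Y⟦n⟧` for `Y ∈ D`. -/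
def shiftClass (D : Set C) (n : ℤ) : Set C :=
  {X : C | ∃ Y ∈ D, Nonempty (X ≅ (Y⟦n⟧ : C))}

/-- A class of objects is extension-stable if for any distinguished triangle
`A → B → C' → A⟦1⟧` with `A, C' ∈ D` one has `B ∈ D`. -/
def ExtensionStable (D : Set C) : Prop :=
  ∀ (T : Triangle C), T ∈ (distTriang C) → T.obj₁ ∈ D → T.obj₃ ∈ D → T.obj₂ ∈ D

/-- The envelope of a class of objects: the smallest extension-stable class containing it. -/
def envelope (F : Set C) : Set C :=
  ⋂₀ {D : Set C | ExtensionStable C D ∧ F ⊆ D}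

/-- A class of objects corresponding to a strictly full triangulated subcategory. -/
structure IsTriangulatedClass (S : Set C) : Prop where
  isoClosed : ∀ ⦃X Y : C⦄, (X ≅ Y) → X ∈ S → Y ∈ S
  shift : ∀ (n : ℤ) (X : C), X ∈ S → (X⟦n⟧ : C) ∈ S
  ext : ExtensionStable C S

/-- The smallest strictly full triangulated subcategory (as a class of objects)
containing a given class of objects. -/
def triangulatedHull (F : Set C) : Set C :=
  ⋂₀ {S : Set C | IsTriangulatedClass C S ∧ F ⊆ S}

/-- A family `(A i)` of classes of objects is semi-orthogonal if
`Hom(X, Y⟦s⟧) = 0` for `X ∈ A i`, `Y ∈ A j` whenever `s < 0` or `s > i - j`. -/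
def SemiOrthogonal (A : ℤ → Set C) : Prop :=
  ∀ i j s : ℤ, (s < 0 ∨ i - j < s) →
    ∀ ⦃X : C⦄, X ∈ A i → ∀ ⦃Y : C⦄, Y ∈ A j → ∀ f : X ⟶ (Y⟦s⟧ : C), f = 0

/-- Strong semi-orthogonality: semi-orthogonality together with `A i ⊥ A j` for `i ≠ j`. -/
def StronglySemiOrthogonal (A : ℤ → Set C) : Prop :=
  SemiOrthogonal C A ∧ ∀ i j : ℤ, i ≠ j → Perp C (A i) (A j)

/-- The family `(A i)` is generating: the smallest strictly full triangulated subcategory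
containing all the `A i` is the whole category. -/
def IsGenerating (A : ℤ → Set C) : Prop :=
  ∀ X : C, X ∈ triangulatedHull C (⋃ i : ℤ, A i)

end WT

namespace WT

/-- A category is abelian semi-simple if it carries an abelian structure for which every
object is a finite direct sum of simple objects. -/
def IsSemisimpleAbelian (B : Type*) [Category B] : Prop :=
  ∃ inst : Abelian B,
    haveI := inst
    haveI : HasFiniteBiproducts B := Abelian.hasFiniteBiproducts
    ∀ X : B, ∃ (n : ℕ) (f : Fin n → B),
      (∀ l, Simple (f l)) ∧ Nonempty (X ≅ ⨁ f)

variable (C : Type u) [Category.{v} C] [Preadditive C] [HasZeroObject C]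
  [HasShift C ℤ] [∀ n : ℤ, (shiftFunctor C n).Additive] [Pretriangulated C]

/-- A bounded t-structure, given by the classes `C^{t≤0}` and `C^{t≥0}`. -/
structure BoundedTStructure where
  le : Set C
  ge : Set C
  le_shift : ∀ X ∈ le, (X⟦(1 : ℤ)⟧ : C) ∈ le
  ge_shift : ∀ X ∈ ge, (X⟦(-1 : ℤ)⟧ : C) ∈ ge
  orth : ∀ X ∈ le, ∀ Y ∈ ge, ∀ f : X ⟶ (Y⟦(-1 : ℤ)⟧ : C), f = 0
  decomp : ∀ X : C, ∃ (A B : C) (f : A ⟶ X) (g : X ⟶ B) (h : B ⟶ (A⟦(1 : ℤ)⟧ : C)),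
    Triangle.mk f g h ∈ (distTriang C) ∧ A ∈ le ∧ B ∈ shiftClass C ge (-1)
  bounded_le : ∀ X : C, ∃ i : ℤ, X ∈ shiftClass C le (-i)
  bounded_ge : ∀ X : C, ∃ j : ℤ, X ∈ shiftClass C ge (-j)

variable {C}

/-- `C^{t≤i} := C^{t≤0}[-i]`. -/
def BoundedTStructure.tle (t : BoundedTStructure C) (i : ℤ) : Set C :=
  shiftClass C t.le (-i)

/-- `C^{t≥i} := C^{t≥0}[-i]`. -/
def BoundedTStructure.tge (t : BoundedTStructure C) (i : ℤ) : Set C :=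
  shiftClass C t.ge (-i)

/-- The heart of a t-structure. -/
def BoundedTStructure.heart (t : BoundedTStructure C) : Set C :=
  t.le ∩ t.ge

variable (C)

/-- A bounded weight structure (sign convention of the paper), given by the classes
`C^{w≤0}` and `C^{w≥0}`. -/
structure BoundedWeightStructure [HasBinaryBiproducts C] where
  le : Set C
  ge : Set C
  le_sum : ∀ X ∈ le, ∀ Y ∈ le, (X ⊞ Y : C) ∈ le
  ge_sum : ∀ X ∈ ge, ∀ Y ∈ ge, (X ⊞ Y : C) ∈ ge
  le_retract : ∀ ⦃X Y : C⦄, (∃ (s : X ⟶ Y) (r : Y ⟶ X), s ≫ r = 𝟙 X) → Y ∈ le → X ∈ le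
  ge_retract : ∀ ⦃X Y : C⦄, (∃ (s : X ⟶ Y) (r : Y ⟶ X), s ≫ r = 𝟙 X) → Y ∈ ge → X ∈ ge
  le_shift : ∀ X ∈ le, (X⟦(-1 : ℤ)⟧ : C) ∈ le
  ge_shift : ∀ X ∈ ge, (X⟦(1 : ℤ)⟧ : C) ∈ ge
  orth : ∀ X ∈ le, ∀ Y ∈ ge, ∀ f : X ⟶ (Y⟦(1 : ℤ)⟧ : C), f = 0
  decomp : ∀ X : C, ∃ (A B : C) (f : A ⟶ X) (g : X ⟶ B) (h : B ⟶ (A⟦(1 : ℤ)⟧ : C)),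
    Triangle.mk f g h ∈ (distTriang C) ∧ A ∈ le ∧ B ∈ shiftClass C ge 1
  bounded_le : ∀ X : C, ∃ i : ℤ, X ∈ shiftClass C le i
  bounded_ge : ∀ X : C, ∃ j : ℤ, X ∈ shiftClass C ge j

variable {C} [HasBinaryBiproducts C]

/-- `C^{w≤i} := C^{w≤0}[i]`. -/
def BoundedWeightStructure.wle (w : BoundedWeightStructure C) (i : ℤ) : Set C :=
  shiftClass C w.le i

/-- `C^{w≥i} := C^{w≥0}[i]`. -/
def BoundedWeightStructure.wge (w : BoundedWeightStructure C) (i : ℤ) : Set C :=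
  shiftClass C w.ge i

/-- A nice weight decomposition of `X` at level `i`: a weight decomposition
`w_{≤i}X → X → w_{≥i+1}X` all three of whose terms lie in the heart of `t`. -/
def NiceDecomposition (w : BoundedWeightStructure C) (t : BoundedTStructure C)
    (i : ℤ) (X : C) : Prop :=
  ∃ (A B : C) (f : A ⟶ X) (g : X ⟶ B) (h : B ⟶ (A⟦(1 : ℤ)⟧ : C)),
    Triangle.mk f g h ∈ (distTriang C) ∧ A ∈ w.wle i ∧ B ∈ w.wge (i + 1) ∧
      A ∈ t.heart ∧ X ∈ t.heart ∧ B ∈ t.heart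

/-- Condition (iv) of Theorem 1.1: every object of the heart of `t` admits a nice
weight decomposition at every level. -/
def ConditionIV (w : BoundedWeightStructure C) (t : BoundedTStructure C) : Prop :=
  ∀ X ∈ t.heart, ∀ i : ℤ, NiceDecomposition w t i X

/-- The heart of `t` as a full subcategory. -/
abbrev Heart (t : BoundedTStructure C) := ObjectProperty.FullSubcategory (fun X : C => X ∈ t.heart)

/-- A morphism in the heart, viewed as a morphism of the ambient category. -/
def homC {P : C → Prop} {X Y : ObjectProperty.FullSubcategory P} (f : X ⟶ Y) : X.obj ⟶ Y.obj := f.hom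

/-- `0 → X → Y → Z → 0` is a short exact sequence in the heart of `t`; equivalently,
all three objects lie in the heart and the pair of morphisms extends to a
distinguished triangle. -/
def HeartSES (t : BoundedTStructure C) {X Y Z : C} (f : X ⟶ Y) (g : Y ⟶ Z) : Prop :=
  X ∈ t.heart ∧ Y ∈ t.heart ∧ Z ∈ t.heart ∧
    ∃ h : Z ⟶ (X⟦(1 : ℤ)⟧ : C), Triangle.mk f g h ∈ (distTriang C)

/-- A functor from the heart to itself is exact if it preserves short exact sequences. -/
def HeartExact (t : BoundedTStructure C) (F : Heart t ⥤ Heart t) : Prop :=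
  ∀ (X Y Z : Heart t) (f : X ⟶ Y) (g : Y ⟶ Z),
    HeartSES t (homC f) (homC g) → HeartSES t (homC (F.map f)) (homC (F.map g))

end WT


namespace WT

variable (C : Type u) [Category.{v} C] [Preadditive C] [HasZeroObject C]
  [HasShift C ℤ] [∀ n : ℤ, (shiftFunctor C n).Additive] [Pretriangulated C]
variable [HasBinaryBiproducts C]


set_option linter.unusedSectionVars false

section Infra

variable {C}

/-- All morphisms between two objects vanish. -/
def Van (X Y : C) : Prop := ∀ f : X ⟶ Y, f = 0

lemma van_of_iso {X X' Y Y' : C} (eX : X ≅ X') (eY : Y ≅ Y') (h : Van X' Y') : Van X Y := by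
  intro f
  have h1 : f = eX.hom ≫ (eX.inv ≫ f ≫ eY.hom) ≫ eY.inv := by simp
  rw [h1, h (eX.inv ≫ f ≫ eY.hom), zero_comp, comp_zero]

lemma van_shift {X Y : C} (h : Van X Y) (n : ℤ) : Van ((X⟦n⟧ : C)) ((Y⟦n⟧ : C)) := by
  intro f
  obtain ⟨g, rfl⟩ := (shiftFunctor C n).map_surjective f
  rw [h g, Functor.map_zero]

/-- composition of shifts -/
noncomputable def sAdd (a b c : ℤ) (h : a + b = c) (P : C) : (((P⟦a⟧ : C))⟦b⟧ : C) ≅ (P⟦c⟧ : C) :=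
  ((shiftFunctorAdd' C a b c h).app P).symm

noncomputable def sZero (P : C) : ((P⟦(0 : ℤ)⟧ : C)) ≅ P := (shiftFunctorZero C ℤ).app P

noncomputable def sCancel (a : ℤ) (P : C) : (((P⟦a⟧ : C))⟦-a⟧ : C) ≅ P :=
  (sAdd a (-a) 0 (by ring) P).trans (sZero P)

lemma van_unshift {X Y : C} (h : Van X ((Y⟦(1 : ℤ)⟧ : C))) : Van ((X⟦(-1 : ℤ)⟧ : C)) Y :=
  van_of_iso (Iso.refl _) (sCancel 1 Y).symm (van_shift h (-1))

lemma shiftClass_iso {D : Set C} {n : ℤ} {X Y : C} (e : X ≅ Y) (hY : Y ∈ shiftClass C D n) :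
    X ∈ shiftClass C D n := by
  obtain ⟨P, hP, ⟨e'⟩⟩ := hY; exact ⟨P, hP, ⟨e.trans e'⟩⟩

lemma shiftClass_self {D : Set C} {P : C} (hP : P ∈ D) (n : ℤ) :
    (P⟦n⟧ : C) ∈ shiftClass C D n := ⟨P, hP, ⟨Iso.refl _⟩⟩

lemma shiftClass_cast {D : Set C} {n m : ℤ} (h : n = m) {X : C} (hX : X ∈ shiftClass C D n) :
    X ∈ shiftClass C D m := h ▸ hX

lemma shiftClass_shift {D : Set C} {n : ℤ} {X : C} (hX : X ∈ shiftClass C D n) (m : ℤ) :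
    (X⟦m⟧ : C) ∈ shiftClass C D (n + m) := by
  obtain ⟨P, hP, ⟨e⟩⟩ := hX
  exact ⟨P, hP, ⟨((shiftFunctor C m).mapIso e).trans (sAdd n m (n + m) rfl P)⟩⟩

lemma shiftClass_zero' {D : Set C} {X : C} (hX : X ∈ D) : X ∈ shiftClass C D 0 :=
  ⟨X, hX, ⟨(sZero X).symm⟩⟩

lemma shiftClass_step_down {D : Set C} (hD : ∀ X ∈ D, ((X⟦(-1 : ℤ)⟧ : C)) ∈ D) (a : ℤ) :
    shiftClass C D a ⊆ shiftClass C D (a + 1) := by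
  rintro X ⟨P, hP, ⟨e⟩⟩
  exact ⟨(P⟦(-1 : ℤ)⟧ : C), hD P hP,
    ⟨e.trans ((sAdd (-1) (a + 1) a (by ring) P).symm)⟩⟩

lemma shiftClass_step_up {D : Set C} (hD : ∀ X ∈ D, ((X⟦(1 : ℤ)⟧ : C)) ∈ D) (a : ℤ) :
    shiftClass C D (a + 1) ⊆ shiftClass C D a := by
  rintro X ⟨P, hP, ⟨e⟩⟩
  exact ⟨(P⟦(1 : ℤ)⟧ : C), hD P hP, ⟨e.trans ((sAdd 1 a (a + 1) (by ring) P).symm)⟩⟩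

lemma shiftClass_mono {D : Set C} (hD : ∀ X ∈ D, ((X⟦(-1 : ℤ)⟧ : C)) ∈ D) {a b : ℤ}
    (hab : a ≤ b) : shiftClass C D a ⊆ shiftClass C D b := by
  obtain ⟨m, rfl⟩ := Int.le.dest hab
  induction m with
  | zero => simp
  | succ k ih =>
    have h1 : a + ((k : ℤ) + 1) = (a + k) + 1 := by push_cast; ring
    rw [show ((k + 1 : ℕ) : ℤ) = (k : ℤ) + 1 by push_cast; ring, h1]
    exact (ih (by omega)).trans (shiftClass_step_down hD _)

lemma shiftClass_anti {D : Set C} (hD : ∀ X ∈ D, ((X⟦(1 : ℤ)⟧ : C)) ∈ D) {a b : ℤ}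
    (hab : a ≤ b) : shiftClass C D b ⊆ shiftClass C D a := by
  obtain ⟨m, rfl⟩ := Int.le.dest hab
  induction m with
  | zero => simp
  | succ k ih =>
    have h1 : a + ((k : ℤ) + 1) = (a + k) + 1 := by push_cast; ring
    rw [show ((k + 1 : ℕ) : ℤ) = (k : ℤ) + 1 by push_cast; ring, h1]
    exact (shiftClass_step_up hD _).trans (ih (by omega))

section Orth

variable {w : BoundedWeightStructure C} {t : BoundedTStructure C}

lemma van_w_core {P : C} (hP : P ∈ w.le) :
    ∀ (m : ℕ) (Q : C), Q ∈ w.ge → Van P ((Q⟦(m : ℤ) + 1⟧ : C)) := by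
  intro m
  induction m with
  | zero =>
    intro Q hQ
    refine van_of_iso (Iso.refl _) ?_ (fun f => w.orth P hP Q hQ f)
    exact eqToIso (by norm_num)
  | succ k ih =>
    intro Q hQ
    have e : ((Q⟦((k : ℤ) + 1 + 1)⟧ : C)) ≅ (((Q⟦(1 : ℤ)⟧ : C))⟦(k : ℤ) + 1⟧ : C) :=
      (sAdd 1 ((k : ℤ) + 1) ((k : ℤ) + 1 + 1) (by ring) Q).symm
    have e2 : ((Q⟦((k : ℤ) + 1 + 1)⟧ : C)) = ((Q⟦((k + 1 : ℕ) : ℤ) + 1⟧ : C)) := by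
      norm_num
    refine van_of_iso (Iso.refl _) (eqToIso e2.symm ≪≫ e) (ih _ (w.ge_shift Q hQ))

lemma van_worth {a b : ℤ} (hab : a < b) {X Y : C} (hX : X ∈ w.wle a) (hY : Y ∈ w.wge b) :
    Van X Y := by
  obtain ⟨P, hP, ⟨eX⟩⟩ := hX
  obtain ⟨Q, hQ, ⟨eY⟩⟩ := hY
  obtain ⟨m, hm⟩ := Int.le.dest (by omega : 1 ≤ b - a)
  have core : Van P ((Q⟦(m : ℤ) + 1⟧ : C)) := van_w_core hP m Q hQ
  have v1 : Van ((P⟦a⟧ : C)) (((Q⟦(m : ℤ) + 1⟧ : C))⟦a⟧ : C) := van_shift core a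
  have e3 : ((Q⟦b⟧ : C)) ≅ (((Q⟦(m : ℤ) + 1⟧ : C))⟦a⟧ : C) := by
    refine (sAdd ((m : ℤ) + 1) a b (by omega) Q).symm
  exact van_of_iso eX (eY.trans e3) v1

lemma van_t_core {P : C} (hP : P ∈ t.le) :
    ∀ (m : ℕ) (Q : C), Q ∈ t.ge → Van P ((Q⟦-((m : ℤ) + 1)⟧ : C)) := by
  intro m
  induction m with
  | zero =>
    intro Q hQ
    refine van_of_iso (Iso.refl _) (eqToIso (by norm_num)) (fun f => t.orth P hP Q hQ f)
  | succ k ih =>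
    intro Q hQ
    have e : ((Q⟦-((k : ℤ) + 1 + 1)⟧ : C)) ≅ (((Q⟦(-1 : ℤ)⟧ : C))⟦-((k : ℤ) + 1)⟧ : C) :=
      (sAdd (-1) (-((k : ℤ) + 1)) (-((k : ℤ) + 1 + 1)) (by ring) Q).symm
    have e2 : ((Q⟦-((k : ℤ) + 1 + 1)⟧ : C)) = ((Q⟦-(((k + 1 : ℕ) : ℤ) + 1)⟧ : C)) := by
      norm_num
    exact van_of_iso (Iso.refl _) (eqToIso e2.symm ≪≫ e) (ih _ (t.ge_shift Q hQ))

/-- `Hom(W⟦1⟧, Z) = 0` for `W ∈ t.le`, `Z ∈ t.ge`. -/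
lemma van_t1 {W Z : C} (hW : W ∈ t.le) (hZ : Z ∈ t.ge) : Van ((W⟦(1 : ℤ)⟧ : C)) Z := by
  have core : Van W ((Z⟦-((0 : ℕ) + 1 : ℤ)⟧ : C)) := van_t_core hW 0 Z hZ
  have v1 := van_shift core 1
  refine van_of_iso (Iso.refl _) ?_ v1
  refine ((sCancel (-1 : ℤ) Z).symm.trans ?_).trans
    ((Functor.mapIso _ (eqToIso (by norm_num : (Z⟦(-1 : ℤ)⟧ : C) = (Z⟦-((0 : ℕ) + 1 : ℤ)⟧ : C)))))
  exact eqToIso (by norm_num)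

/-- `Hom(Z, W⟦-1⟧) = 0` for `Z ∈ t.le`, `W ∈ t.ge`. -/
lemma van_t2 {Z W : C} (hZ : Z ∈ t.le) (hW : W ∈ t.ge) : Van Z ((W⟦(-1 : ℤ)⟧ : C)) :=
  fun f => t.orth Z hZ W hW f

end Orth

section Tri

/-- kill a map out of `obj₃` -/
lemma kill₃out {T : Triangle C} (hT : T ∈ distTriang C) {Z : C} (u : T.obj₃ ⟶ Z)
    (h0 : T.mor₂ ≫ u = 0) (hvan : Van ((T.obj₁⟦(1 : ℤ)⟧ : C)) Z) : u = 0 := by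
  obtain ⟨g, hg⟩ := Triangle.yoneda_exact₃ T hT u h0
  rw [hg, hvan g, comp_zero]

/-- kill a map out of `obj₂` -/
lemma kill₂out {T : Triangle C} (hT : T ∈ distTriang C) {Z : C} (u : T.obj₂ ⟶ Z)
    (h0 : T.mor₁ ≫ u = 0) (hvan : Van T.obj₃ Z) : u = 0 := by
  obtain ⟨g, hg⟩ := Triangle.yoneda_exact₂ T hT u h0
  rw [hg, hvan g, comp_zero]

/-- kill a map into `obj₂` -/
lemma kill₂in {T : Triangle C} (hT : T ∈ distTriang C) {Z : C} (u : Z ⟶ T.obj₂)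
    (h0 : u ≫ T.mor₂ = 0) (hvan : Van Z T.obj₁) : u = 0 := by
  obtain ⟨g, hg⟩ := Triangle.coyoneda_exact₂ T hT u h0
  rw [hg, hvan g, zero_comp]

/-- kill a map into `obj₃` -/
lemma kill₃in {T : Triangle C} (hT : T ∈ distTriang C) {Z : C} (u : Z ⟶ T.obj₃)
    (h0 : u ≫ T.mor₃ = 0) (hvan : Van Z T.obj₂) : u = 0 := by
  obtain ⟨g, hg⟩ := Triangle.coyoneda_exact₃ T hT u h0
  rw [hg, hvan g, zero_comp]

/-- kill a map into `obj₁` -/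
lemma kill₁in {T : Triangle C} (hT : T ∈ distTriang C) {Z : C} (u : Z ⟶ T.obj₁)
    (h0 : u ≫ T.mor₁ = 0) (hvan : Van Z ((T.obj₃⟦(-1 : ℤ)⟧ : C))) : u = 0 := by
  obtain ⟨g, hg⟩ := Triangle.coyoneda_exact₂ _ (inv_rot_of_distTriang _ hT) u h0
  rw [hg, show g = 0 from hvan g]
  exact zero_comp

lemma cancel₃out {T : Triangle C} (hT : T ∈ distTriang C) {Z : C} {u v : T.obj₃ ⟶ Z}
    (h : T.mor₂ ≫ u = T.mor₂ ≫ v) (hvan : Van ((T.obj₁⟦(1 : ℤ)⟧ : C)) Z) : u = v := by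
  have h1 := kill₃out hT (u - v) (by rw [Preadditive.comp_sub, h, sub_self]) hvan
  rwa [sub_eq_zero] at h1

/-- Maps into `obj₃` vanish if they vanish against `mor₂`-image and pieces do. -/
lemma van_into₃ {T : Triangle C} (hT : T ∈ distTriang C) {Z : C}
    (h2 : Van Z T.obj₂) (h3 : Van Z ((T.obj₁⟦(1 : ℤ)⟧ : C))) : Van Z T.obj₃ := by
  intro u
  obtain ⟨g, hg⟩ := Triangle.coyoneda_exact₃ T hT u (h3 _)
  rw [hg, h2 g, zero_comp]

end Tri

end Infra


section Wrap

variable {C}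

lemma yex₂ {X Y Z : C} {f : X ⟶ Y} {g : Y ⟶ Z} {h : Z ⟶ (X⟦(1 : ℤ)⟧ : C)}
    (hT : Triangle.mk f g h ∈ distTriang C) {W : C} (u : Y ⟶ W) (hu : f ≫ u = 0) :
    ∃ v : Z ⟶ W, u = g ≫ v := Triangle.yoneda_exact₂ _ hT u hu

lemma yex₃ {X Y Z : C} {f : X ⟶ Y} {g : Y ⟶ Z} {h : Z ⟶ (X⟦(1 : ℤ)⟧ : C)}
    (hT : Triangle.mk f g h ∈ distTriang C) {W : C} (u : Z ⟶ W) (hu : g ≫ u = 0) :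
    ∃ v : (X⟦(1 : ℤ)⟧ : C) ⟶ W, u = h ≫ v := Triangle.yoneda_exact₃ _ hT u hu

lemma cyex₁ {X Y Z : C} {f : X ⟶ Y} {g : Y ⟶ Z} {h : Z ⟶ (X⟦(1 : ℤ)⟧ : C)}
    (hT : Triangle.mk f g h ∈ distTriang C) {W : C} (u : W ⟶ (X⟦(1 : ℤ)⟧ : C))
    (hu : u ≫ f⟦(1 : ℤ)⟧' = 0) :
    ∃ v : W ⟶ Z, u = v ≫ h := Triangle.coyoneda_exact₁ _ hT u hu

lemma cyex₂ {X Y Z : C} {f : X ⟶ Y} {g : Y ⟶ Z} {h : Z ⟶ (X⟦(1 : ℤ)⟧ : C)}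
    (hT : Triangle.mk f g h ∈ distTriang C) {W : C} (u : W ⟶ Y) (hu : u ≫ g = 0) :
    ∃ v : W ⟶ X, u = v ≫ f := Triangle.coyoneda_exact₂ _ hT u hu

lemma cyex₃ {X Y Z : C} {f : X ⟶ Y} {g : Y ⟶ Z} {h : Z ⟶ (X⟦(1 : ℤ)⟧ : C)}
    (hT : Triangle.mk f g h ∈ distTriang C) {W : C} (u : W ⟶ Z) (hu : u ≫ h = 0) :
    ∃ v : W ⟶ Y, u = v ≫ g := Triangle.coyoneda_exact₃ _ hT u hu

lemma cdtm {X Y Z X' Y' Z' : C} {f : X ⟶ Y} {g : Y ⟶ Z} {h : Z ⟶ (X⟦(1 : ℤ)⟧ : C)}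
    {f' : X' ⟶ Y'} {g' : Y' ⟶ Z'} {h' : Z' ⟶ (X'⟦(1 : ℤ)⟧ : C)}
    (hT : Triangle.mk f g h ∈ distTriang C) (hT' : Triangle.mk f' g' h' ∈ distTriang C)
    (a : X ⟶ X') (b : Y ⟶ Y') (comm : f ≫ b = a ≫ f') :
    ∃ c : Z ⟶ Z', g ≫ c = b ≫ g' ∧ h ≫ a⟦(1 : ℤ)⟧' = c ≫ h' :=
  Pretriangulated.complete_distinguished_triangle_morphism _ _ hT hT' a b comm

end Wrap

section Main

variable {C}

@[simp] lemma homC_comp {P : C → Prop} {X Y Z : ObjectProperty.FullSubcategory P} (f : X ⟶ Y) (g : Y ⟶ Z) :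
    homC (f ≫ g) = homC f ≫ homC g := rfl

@[simp] lemma homC_id {P : C → Prop} (X : ObjectProperty.FullSubcategory P) : homC (𝟙 X) = 𝟙 X.obj := rfl

@[simp] lemma homC_def {P : C → Prop} {X Y : ObjectProperty.FullSubcategory P} (f : X ⟶ Y) :
    homC f = f.hom := rfl

lemma isZero₁_of_mor₁_zero {T : Triangle C} (hT : T ∈ distTriang C) (h1 : T.mor₁ = 0)
    (hvan : Van ((T.obj₁⟦(1 : ℤ)⟧ : C)) T.obj₃) : IsZero T.obj₁ := by
  obtain ⟨e, he⟩ := Triangle.coyoneda_exact₃ _ (rot_of_distTriang _ hT)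
    (𝟙 ((T.obj₁⟦(1 : ℤ)⟧ : C))) (by
      dsimp [Triangle.rotate]
      rw [h1]
      simp
      exact comp_zero)
  rw [show e = 0 from hvan e, zero_comp] at he
  rw [IsZero.iff_id_eq_zero]
  apply (shiftFunctor C (1 : ℤ)).map_injective
  rw [CategoryTheory.Functor.map_id, CategoryTheory.Functor.map_zero]
  exact he

section W

variable {w : BoundedWeightStructure C}

lemma wle_mono {a b : ℤ} (hab : a ≤ b) : w.wle a ⊆ w.wle b :=
  shiftClass_mono w.le_shift hab

lemma wge_anti {a b : ℤ} (hab : a ≤ b) : w.wge b ⊆ w.wge a :=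
  shiftClass_anti w.ge_shift hab

lemma wle_shift_mem {a : ℤ} {X : C} (hX : X ∈ w.wle a) (n : ℤ) :
    (X⟦n⟧ : C) ∈ w.wle (a + n) := shiftClass_shift hX n

lemma wge_shift_mem {a : ℤ} {X : C} (hX : X ∈ w.wge a) (n : ℤ) :
    (X⟦n⟧ : C) ∈ w.wge (a + n) := shiftClass_shift hX n

lemma retract_shiftClass {D : Set C}
    (hD : ∀ ⦃X Y : C⦄, (∃ (s : X ⟶ Y) (r : Y ⟶ X), s ≫ r = 𝟙 X) → Y ∈ D → X ∈ D)
    {k : ℤ} {X Y : C} (s : X ⟶ Y) (r : Y ⟶ X) (hsr : s ≫ r = 𝟙 X)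
    (hY : Y ∈ shiftClass C D k) : X ∈ shiftClass C D k := by
  obtain ⟨P, hP, ⟨e⟩⟩ := hY
  have hmem : (X⟦(-k : ℤ)⟧ : C) ∈ D := by
    refine hD ⟨(shiftFunctor C (-k)).map (s ≫ e.hom) ≫ (sCancel k P).hom,
      (sCancel k P).inv ≫ (shiftFunctor C (-k)).map (e.inv ≫ r), ?_⟩ hP
    rw [Category.assoc, Iso.hom_inv_id_assoc, ← CategoryTheory.Functor.map_comp]
    have : (s ≫ e.hom) ≫ e.inv ≫ r = 𝟙 X := by
      rw [Category.assoc, Iso.hom_inv_id_assoc, hsr]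
    rw [this, CategoryTheory.Functor.map_id]
  exact ⟨(X⟦(-k : ℤ)⟧ : C), hmem, ⟨((sAdd (-k) k 0 (by ring) X).trans (sZero X)).symm⟩⟩

lemma retract_wle {k : ℤ} {X Y : C} (s : X ⟶ Y) (r : Y ⟶ X) (hsr : s ≫ r = 𝟙 X)
    (hY : Y ∈ w.wle k) : X ∈ w.wle k := retract_shiftClass w.le_retract s r hsr hY

lemma retract_wge {k : ℤ} {X Y : C} (s : X ⟶ Y) (r : Y ⟶ X) (hsr : s ≫ r = 𝟙 X)
    (hY : Y ∈ w.wge k) : X ∈ w.wge k := retract_shiftClass w.ge_retract s r hsr hY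

/-- weight decomposition at level `k` -/
lemma wdecomp (w : BoundedWeightStructure C) (Z : C) (k : ℤ) :
    ∃ (A B : C) (f : A ⟶ Z) (g : Z ⟶ B) (h : B ⟶ (A⟦(1 : ℤ)⟧ : C)),
      Triangle.mk f g h ∈ (distTriang C) ∧ A ∈ w.wle k ∧ B ∈ w.wge (k + 1) := by
  obtain ⟨A, B, f, g, h, hdist, hA, hB⟩ := w.decomp ((Z⟦(-k : ℤ)⟧ : C))
  have hdist' := Pretriangulated.Triangle.shift_distinguished _ hdist k
  set T' := (CategoryTheory.shiftFunctor (Triangle C) k).obj (Triangle.mk f g h) with hT'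
  have hobj1 : T'.obj₁ = (A⟦k⟧ : C) := rfl
  have hobj2 : T'.obj₂ = ((Z⟦(-k : ℤ)⟧ : C)⟦k⟧ : C) := rfl
  have hobj3 : T'.obj₃ = (B⟦k⟧ : C) := rfl
  set e2 : T'.obj₂ ≅ Z := (sAdd (-k) k 0 (by ring) Z).trans (sZero Z)
  refine ⟨(A⟦k⟧ : C), (B⟦k⟧ : C), T'.mor₁ ≫ e2.hom, e2.inv ≫ T'.mor₂, T'.mor₃,
    ?_, shiftClass_self hA k, shiftClass_cast (by ring) (shiftClass_shift hB k)⟩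
  refine Pretriangulated.isomorphic_distinguished _ hdist' _ ?_
  exact Triangle.isoMk _ _ (Iso.refl _) e2.symm (Iso.refl _)
    (by change (T'.mor₁ ≫ e2.hom) ≫ e2.inv = 𝟙 T'.obj₁ ≫ T'.mor₁; simp)
    (by change (e2.inv ≫ T'.mor₂) ≫ 𝟙 T'.obj₃ = e2.inv ≫ T'.mor₂; simp)
    (by change T'.mor₃ ≫ (shiftFunctor C 1).map (𝟙 T'.obj₁) = 𝟙 T'.obj₃ ≫ T'.mor₃; simp)

lemma ext_wle {k : ℤ} {T : Triangle C} (hT : T ∈ distTriang C)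
    (h1 : T.obj₁ ∈ w.wle k) (h3 : T.obj₃ ∈ w.wle k) : T.obj₂ ∈ w.wle k := by
  obtain ⟨A, B, a, z, hcon, hdec, hA, hB⟩ := wdecomp w T.obj₂ k
  have hz1 : T.mor₁ ≫ z = 0 := van_worth (by omega) h1 hB _
  obtain ⟨e, he⟩ := Triangle.yoneda_exact₂ T hT z hz1
  rw [van_worth (by omega : k < k + 1) h3 hB e, comp_zero] at he
  obtain ⟨g, hg⟩ := Triangle.coyoneda_exact₂ _ hdec (𝟙 T.obj₂)
    (by exact (Category.id_comp _).trans he)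
  exact retract_wle g a hg.symm hA

lemma ext_wge {k : ℤ} {T : Triangle C} (hT : T ∈ distTriang C)
    (h1 : T.obj₁ ∈ w.wge k) (h3 : T.obj₃ ∈ w.wge k) : T.obj₂ ∈ w.wge k := by
  obtain ⟨A, B, a, z, hcon, hdec, hA, hB⟩ := wdecomp w T.obj₂ (k - 1)
  have ha2 : a ≫ T.mor₂ = 0 := van_worth (by omega) hA h3 _
  obtain ⟨e, he⟩ := Triangle.coyoneda_exact₂ T hT a ha2
  rw [van_worth (by omega : k - 1 < k) hA h1 e, zero_comp] at he
  obtain ⟨g, hg⟩ := Triangle.yoneda_exact₂ _ hdec (𝟙 T.obj₂)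
    (by show a ≫ 𝟙 T.obj₂ = 0; rw [Category.comp_id]; exact he)
  exact retract_wge z g hg.symm (shiftClass_cast (by ring) hB)

end W

variable (w : BoundedWeightStructure C) (t : BoundedTStructure C)

/-- Bundle of all the data and hypotheses of the theorem. -/
structure Ctx where
  h4 : ConditionIV w t
  Wle : ℤ → (Heart t ⥤ Heart t)
  eps : ∀ i : ℤ, Wle i ⟶ 𝟭 (Heart t)
  hWleMem : ∀ (i : ℤ) (X : Heart t), ((Wle i).obj X).obj ∈ w.wle i
  hWleAdj : ∀ (i : ℤ) (Y X : Heart t), Y.obj ∈ w.wle i → ∀ f : Y ⟶ X,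
      ∃! g : Y ⟶ (Wle i).obj X, g ≫ (eps i).app X = f
  Wge : ℤ → (Heart t ⥤ Heart t)
  eta : ∀ i : ℤ, 𝟭 (Heart t) ⟶ Wge i
  hWge : ∀ (i : ℤ) (X : Heart t),
      HeartSES t (homC ((eps (i - 1)).app X)) (homC ((eta i).app X))

namespace Ctx

variable {w t} (S : Ctx w t)

lemma isIso_homC {X Y : Heart t} (f : X ⟶ Y) (h : IsIso f) : IsIso (homC f) := by
  obtain ⟨g, hg1, hg2⟩ := h.out
  exact ⟨g.hom, congrArg homC hg1, congrArg homC hg2⟩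

lemma isIso_of_homC {X Y : Heart t} (f : X ⟶ Y) (h : IsIso (homC f)) : IsIso f := by
  obtain ⟨g, hg1, hg2⟩ := h.out
  exact ⟨ObjectProperty.homMk g, ObjectProperty.hom_ext _ hg1, ObjectProperty.hom_ext _ hg2⟩

lemma epsCancel {k : ℤ} {Y X : Heart t} (hY : Y.obj ∈ w.wle k)
    {g g' : Y ⟶ (S.Wle k).obj X}
    (h : g ≫ (S.eps k).app X = g' ≫ (S.eps k).app X) : g = g' := by
  obtain ⟨g₀, _, hu⟩ := S.hWleAdj k Y X hY (g' ≫ (S.eps k).app X)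
  rw [hu g h, hu g' rfl]

lemma fac {k : ℤ} {Y X : Heart t} (hY : Y.obj ∈ w.wle k) (f : Y ⟶ X) :
    ∃ g : Y ⟶ (S.Wle k).obj X, g ≫ (S.eps k).app X = f := by
  obtain ⟨g, hg, _⟩ := S.hWleAdj k Y X hY f
  exact ⟨g, hg⟩

lemma ses' (k : ℤ) (X : Heart t) :
    HeartSES t (homC ((S.eps k).app X)) (homC ((S.eta (k + 1)).app X)) := by
  have h := S.hWge (k + 1) X
  rwa [show k + 1 - 1 = k by ring] at h

lemma eps_iso {k : ℤ} {X : Heart t} (hX : X.obj ∈ w.wle k) : IsIso ((S.eps k).app X) := by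
  obtain ⟨g, hg⟩ := S.fac hX (𝟙 X)
  refine ⟨g, ?_, hg⟩
  refine S.epsCancel (S.hWleMem k X) ?_
  rw [Category.assoc, hg]
  simp

lemma Wle_isZero {k k' : ℤ} (hkk : k' < k) {X : Heart t} (hX : X.obj ∈ w.wge k) :
    IsZero ((S.Wle k').obj X).obj := by
  obtain ⟨hh1, hh2, hh3, h2, hdist⟩ := S.ses' k' X
  have hz : homC ((S.eps k').app X) = 0 :=
    van_worth hkk (S.hWleMem k' X) hX _
  exact isZero₁_of_mor₁_zero hdist hz (van_t1 hh1.1 hh3.2)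

lemma eta_iso {k : ℤ} {X : Heart t} (hX : X.obj ∈ w.wge k) : IsIso ((S.eta k).app X) := by
  obtain ⟨hh1, hh2, hh3, h2, hdist⟩ := S.hWge k X
  have hz : homC ((S.eps (k - 1)).app X) = 0 :=
    van_worth (by omega) (S.hWleMem (k - 1) X) hX _
  have hZ : IsZero ((S.Wle (k - 1)).obj X).obj :=
    isZero₁_of_mor₁_zero hdist hz (van_t1 hh1.1 hh3.2)
  exact isIso_of_homC _ ((Triangle.isZero₁_iff_isIso₂ _ hdist).1 hZ)

lemma Wge_isZero {k k' : ℤ} (hkk : k < k') {X : Heart t} (hX : X.obj ∈ w.wle k) :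
    IsZero ((S.Wge k').obj X).obj := by
  obtain ⟨_, _, _, h2, hdist⟩ := S.hWge k' X
  have hiso : IsIso (homC ((S.eps (k' - 1)).app X)) :=
    isIso_homC _ (S.eps_iso (wle_mono (by omega) hX))
  exact Triangle.isZero₃_of_isIso₁ _ hdist hiso

lemma homC_eq {X Y : Heart t} {f g : X ⟶ Y} (h : f = g) : homC f = homC g := congrArg homC h

lemma Wge_mem (k : ℤ) (X : Heart t) : ((S.Wge k).obj X).obj ∈ w.wge k := by
  obtain ⟨A, B, a, b, hni, hdist, hAw, hBw, hAh, hXh, hBh⟩ := S.h4 X.obj X.property (k - 1)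
  obtain ⟨hh1, hh2, hh3, h2, h2dist⟩ := S.hWge k X
  have hBw' : B ∈ w.wge k := shiftClass_cast (by ring) hBw
  have hb0 : homC ((S.eps (k - 1)).app X) ≫ b = 0 :=
    van_worth (by omega) (S.hWleMem (k - 1) X) hBw' _
  obtain ⟨r, hr⟩ := yex₂ h2dist b hb0
  obtain ⟨g, hg⟩ := S.fac (X := X) (Y := ⟨A, hAh⟩) hAw (ObjectProperty.homMk a)
  have ha0 : a ≫ homC ((S.eta k).app X) = 0 := by
    have hc2 : homC ((S.eps (k - 1)).app X) ≫ homC ((S.eta k).app X) = 0 :=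
      comp_distTriang_mor_zero₁₂ _ h2dist
    have hgC : homC g ≫ homC ((S.eps (k - 1)).app X) = a := congrArg homC hg
    rw [← hgC, Category.assoc, hc2, comp_zero]
  obtain ⟨sB, hsB⟩ := yex₂ hdist (homC ((S.eta k).app X)) ha0
  have hrC : b = homC ((S.eta k).app X) ≫ r := hr
  have hsBC : homC ((S.eta k).app X) = b ≫ sB := hsB
  have hrs : r ≫ sB = 𝟙 _ := by
    refine cancel₃out h2dist ?_ (van_t1 hh1.1 hh3.2)
    show homC ((S.eta k).app X) ≫ r ≫ sB = homC ((S.eta k).app X) ≫ 𝟙 _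
    rw [← Category.assoc, ← hrC, ← hsBC, Category.comp_id]
  exact retract_wge r sB hrs hBw'

lemma Wle_wge_mem (k : ℤ) {X : Heart t} (hX : X.obj ∈ w.wge k) :
    ((S.Wle k).obj X).obj ∈ w.wge k := by
  obtain ⟨A, B, a, b, hni, hdist, hAw, hBw, hAh, hXh, hBh⟩ := S.h4 X.obj X.property k
  have hA_ge : A ∈ w.wge k := by
    refine ext_wge (inv_rot_of_distTriang _ hdist) ?_ hX
    exact shiftClass_cast (by ring) (wge_shift_mem hBw (-1))
  obtain ⟨g, hg⟩ := S.fac (X := X) (Y := ⟨A, hAh⟩) hAw (ObjectProperty.homMk a)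
  have he0 : homC ((S.eps k).app X) ≫ b = 0 :=
    van_worth (by omega) (S.hWleMem k X) hBw _
  obtain ⟨u, hu⟩ := cyex₂ hdist (homC ((S.eps k).app X)) he0
  have hgC : homC g ≫ homC ((S.eps k).app X) = a := congrArg homC hg
  have huC : homC ((S.eps k).app X) = u ≫ a := hu
  have hug : (ObjectProperty.homMk u ≫ g : ((S.Wle k).obj X) ⟶ _) = 𝟙 _ := by
    refine S.epsCancel (S.hWleMem k X) ?_
    apply ObjectProperty.hom_ext
    show (u ≫ homC g) ≫ homC ((S.eps k).app X) = 𝟙 _ ≫ homC ((S.eps k).app X)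
    rw [Category.assoc, hgC, Category.id_comp]
    exact huC.symm
  exact retract_wge u (homC g) (congrArg homC hug) hA_ge

lemma G_wle_mem (k : ℤ) (X : Heart t) :
    ((S.Wge k).obj ((S.Wle k).obj X)).obj ∈ w.wle k := by
  obtain ⟨hh1, hh2, hh3, h1, hdist⟩ := S.hWge k ((S.Wle k).obj X)
  refine ext_wle (rot_of_distTriang _ hdist) (S.hWleMem k X) ?_
  exact shiftClass_cast (by ring) (wle_shift_mem (S.hWleMem (k - 1) _) 1)

noncomputable def muApp (k : ℤ) (X : Heart t) :
    (S.Wle (k - 1)).obj X ⟶ (S.Wle k).obj X :=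
  (S.fac (wle_mono (by omega) (S.hWleMem (k - 1) X)) ((S.eps (k - 1)).app X)).choose

lemma muApp_eps (k : ℤ) (X : Heart t) :
    S.muApp k X ≫ (S.eps k).app X = (S.eps (k - 1)).app X :=
  (S.fac (wle_mono (by omega) (S.hWleMem (k - 1) X)) ((S.eps (k - 1)).app X)).choose_spec

lemma muApp_natural (k : ℤ) {X X' : Heart t} (f : X ⟶ X') :
    (S.Wle (k - 1)).map f ≫ S.muApp k X' = S.muApp k X ≫ (S.Wle k).map f := by
  refine S.epsCancel (wle_mono (by omega) (S.hWleMem (k - 1) X)) ?_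
  rw [Category.assoc, S.muApp_eps, Category.assoc, (S.eps k).naturality f,
    ← Category.assoc, S.muApp_eps, (S.eps (k - 1)).naturality f]

noncomputable def muNat (k : ℤ) : S.Wle (k - 1) ⟶ S.Wle k where
  app X := S.muApp k X
  naturality _ _ f := S.muApp_natural k f

lemma delta (k : ℤ) (X : Heart t) :
    HeartSES t (homC (S.muApp k X)) (homC ((S.eta k).app ((S.Wle k).obj X))) := by
  set X₁ := (S.Wle k).obj X with hX₁
  obtain ⟨hh1, hh2, hh3, h1, hdist⟩ := S.hWge k X₁
  obtain ⟨g₀, hg₀⟩ := S.fac (S.hWleMem (k - 1) X) (S.muApp k X)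
  obtain ⟨u₀, hu₀⟩ := S.fac (S.hWleMem (k - 1) X₁)
    (((S.eps (k - 1)).app X₁ ≫ (S.eps k).app X : (S.Wle (k - 1)).obj X₁ ⟶ X))
  have hu₀μ : u₀ ≫ S.muApp k X = (S.eps (k - 1)).app X₁ := by
    refine S.epsCancel (wle_mono (by omega) (S.hWleMem (k - 1) X₁)) ?_
    rw [Category.assoc, S.muApp_eps]; exact hu₀
  have hgu : g₀ ≫ u₀ = 𝟙 _ := by
    refine S.epsCancel (S.hWleMem (k - 1) X) ?_
    rw [Category.assoc, hu₀, ← Category.assoc, hg₀, S.muApp_eps, Category.id_comp]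
  have hug : u₀ ≫ g₀ = 𝟙 _ := by
    refine S.epsCancel (S.hWleMem (k - 1) X₁) ?_
    rw [Category.assoc, hg₀, hu₀μ, Category.id_comp]
  refine ⟨((S.Wle (k - 1)).obj X).property, X₁.property, ((S.Wge k).obj X₁).property,
    h1 ≫ (homC u₀)⟦(1 : ℤ)⟧', ?_⟩
  refine Pretriangulated.isomorphic_distinguished _ hdist _ ?_
  refine Triangle.isoMk _ _ (Iso.mk (homC g₀) (homC u₀) (congrArg homC hgu) (congrArg homC hug)) (Iso.refl _) (Iso.refl _)
    ?_ ?_ ?_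
  · show homC (S.muApp k X) ≫ 𝟙 _ = homC g₀ ≫ homC ((S.eps (k - 1)).app X₁)
    rw [Category.comp_id]
    exact (homC_eq hg₀).symm
  · exact (Category.comp_id _).trans (Category.id_comp _).symm
  · show (h1 ≫ (homC u₀)⟦(1 : ℤ)⟧') ≫ (homC g₀)⟦(1 : ℤ)⟧' = 𝟙 _ ≫ h1
    rw [Category.assoc, ← CategoryTheory.Functor.map_comp, Category.id_comp]
    have : homC u₀ ≫ homC g₀ = 𝟙 _ := congrArg homC hug
    rw [this, CategoryTheory.Functor.map_id, Category.comp_id]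

lemma alpha_pack (i : ℤ) (X : Heart t) :
    ∃ α : (S.Wge i).obj ((S.Wle i).obj X) ⟶ (S.Wle i).obj ((S.Wge i).obj X),
      (homC ((S.eta i).app ((S.Wle i).obj X)) ≫ homC α ≫ homC ((S.eps i).app ((S.Wge i).obj X))
        = homC ((S.eps i).app X) ≫ homC ((S.eta i).app X)) ∧ IsIso α := by
  set B1 := (S.Wle i).obj X with hB1def
  set Y := (S.Wge i).obj X with hYdef
  set G := (S.Wge i).obj B1 with hGdef
  set G' := (S.Wle i).obj Y with hG'def
  set R := (S.Wge (i + 1)).obj X with hRdef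
  set R' := (S.Wge (i + 1)).obj Y with hR'def
  set q : B1.obj ⟶ G.obj := homC ((S.eta i).app B1) with hq
  set f : B1.obj ⟶ X.obj := homC ((S.eps i).app X) with hf
  set ηX : X.obj ⟶ Y.obj := homC ((S.eta i).app X) with hηX
  set j : G'.obj ⟶ Y.obj := homC ((S.eps i).app Y) with hj
  set p : X.obj ⟶ R.obj := homC ((S.eta (i + 1)).app X) with hp
  set η' : Y.obj ⟶ R'.obj := homC ((S.eta (i + 1)).app Y) with hη'
  have hYge : Y.obj ∈ w.wge i := S.Wge_mem i X
  have hGwle : G.obj ∈ w.wle i := S.G_wle_mem i X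
  have hG'wle : G'.obj ∈ w.wle i := S.hWleMem i Y
  have hRge : R.obj ∈ w.wge (i + 1) := S.Wge_mem (i + 1) X
  have hR'ge : R'.obj ∈ w.wge (i + 1) := S.Wge_mem (i + 1) Y
  obtain ⟨h11, h12, h13, h1, d1⟩ := S.hWge i B1
  obtain ⟨h21, h22, h23, h2, d2⟩ := S.hWge i X
  obtain ⟨_, _, _, h3, d3⟩ := S.ses' i X
  obtain ⟨_, _, _, h4, d4⟩ := S.ses' i Y
  obtain ⟨_, _, _, hΔ, dΔ⟩ := S.delta i X
  have hεm1c : homC ((S.eps (i - 1)).app B1) ≫ (f ≫ ηX) = 0 :=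
    van_worth (by omega) (S.hWleMem (i - 1) B1) hYge _
  obtain ⟨v, hv⟩ := yex₂ d1 (f ≫ ηX) hεm1c
  have hvq : f ≫ ηX = q ≫ v := hv
  obtain ⟨α, hα⟩ := S.fac (X := Y) (Y := G) hGwle (ObjectProperty.homMk v)
  have hαj : homC α ≫ j = v := congrArg homC hα
  obtain ⟨θ, hθ⟩ := yex₂ d2 p
    (van_worth (by omega) (S.hWleMem (i - 1) X) hRge _)
  have hθ2 : p = ηX ≫ θ := hθ
  obtain ⟨τ, hτ⟩ := yex₂ d4 θ
    (van_worth (by omega) hG'wle hRge _)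
  have hτ2 : θ = η' ≫ τ := hτ
  obtain ⟨ρ, hρ⟩ := yex₂ d3 (ηX ≫ η')
    (van_worth (by omega) (S.hWleMem i X) hR'ge _)
  have hρ2 : ηX ≫ η' = p ≫ ρ := hρ
  have hρτ : ρ ≫ τ = 𝟙 R.obj := by
    refine cancel₃out d3 ?_ (van_t1 B1.property.1 R.property.2)
    show p ≫ ρ ≫ τ = p ≫ 𝟙 R.obj
    rw [Category.comp_id, ← Category.assoc, ← hρ2, Category.assoc, ← hτ2, ← hθ2]
  have hθρ : θ ≫ ρ = η' := by
    refine cancel₃out d2 ?_ (van_t1 h21.1 R'.property.2)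
    show ηX ≫ θ ≫ ρ = ηX ≫ η'
    rw [← Category.assoc, ← hθ2, ← hρ2]
  have hτρ : τ ≫ ρ = 𝟙 R'.obj := by
    refine cancel₃out d4 ?_ (van_t1 G'.property.1 R'.property.2)
    show η' ≫ τ ≫ ρ = η' ≫ 𝟙 R'.obj
    rw [Category.comp_id, ← Category.assoc, ← hτ2, hθρ]
  set T5 := Triangle.mk j θ (ρ ≫ h4) with hT5
  have d5 : T5 ∈ distTriang C := by
    refine Pretriangulated.isomorphic_distinguished _ d4 _ ?_
    refine Triangle.isoMk _ _ (Iso.refl _) (Iso.refl _) (Iso.mk ρ τ hρτ hτρ) ?_ ?_ ?_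
    · show j ≫ 𝟙 Y.obj = 𝟙 G'.obj ≫ j
      simp
    · show θ ≫ ρ = 𝟙 Y.obj ≫ η'
      rw [hθρ, Category.id_comp]
    · show (ρ ≫ h4) ≫ (𝟙 G'.obj)⟦(1 : ℤ)⟧' = ρ ≫ h4
      rw [CategoryTheory.Functor.map_id, Category.comp_id]
  set c' : B1.obj ⟶ G'.obj := q ≫ homC α with hc'
  have hc'j : c' ≫ j = f ≫ ηX := by
    rw [hc', Category.assoc, hαj, ← hvq]
  obtain ⟨ψ, hψ1, hψ2⟩ := cdtm
    d3 d5 c' ηX hc'j.symm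
  have hψ1' : p ≫ ψ = ηX ≫ θ := hψ1
  have hψ2' : h3 ≫ c'⟦(1 : ℤ)⟧' = ψ ≫ (ρ ≫ h4) := hψ2
  have hψ : ψ = 𝟙 R.obj := by
    refine cancel₃out d3 ?_ (van_t1 B1.property.1 R.property.2)
    show p ≫ ψ = p ≫ 𝟙 R.obj
    rw [Category.comp_id, hψ1', ← hθ2]
  have REL1 : h3 ≫ c'⟦(1 : ℤ)⟧' = ρ ≫ h4 := by
    rw [hψ2', hψ]
    exact Category.id_comp _
  have lemI : ∀ (Z : C), Z ∈ t.ge → ∀ uu : G'.obj ⟶ Z, c' ≫ uu = 0 → uu = 0 := by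
    intro Z hZ uu h0
    have d5i := inv_rot_of_distTriang _ d5
    have hnat := (shiftEquiv C (1 : ℤ)).unitIso.inv.naturality c'
    have hnat' : (shiftFunctor C (-1 : ℤ)).map ((shiftFunctor C (1 : ℤ)).map c') ≫
        (shiftEquiv C (1 : ℤ)).unitIso.inv.app G'.obj =
        (shiftEquiv C (1 : ℤ)).unitIso.inv.app B1.obj ≫ c' := hnat
    have hnatA := reassoc_of% hnat'
    have hm1 : T5.invRotate.mor₁ ≫ uu = 0 := by
      show (-((ρ ≫ h4)⟦(-1 : ℤ)⟧') ≫
        (shiftEquiv C (1 : ℤ)).unitIso.inv.app G'.obj) ≫ uu = 0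
      rw [← REL1]
      have key : (-((h3 ≫ c'⟦(1 : ℤ)⟧')⟦(-1 : ℤ)⟧') ≫
          (shiftEquiv C (1 : ℤ)).unitIso.inv.app G'.obj) ≫ uu = 0 := by
        simp only [CategoryTheory.Functor.map_comp, Preadditive.neg_comp, Category.assoc,
          hnatA, h0, comp_zero, neg_zero]
        rw [neg_eq_zero]
        have hA : ∀ {W : C} (hh : G'.obj ⟶ W),
            (shiftFunctor C (-1 : ℤ)).map ((shiftFunctor C (1 : ℤ)).map c') ≫
              (shiftEquiv C (1 : ℤ)).unitIso.inv.app G'.obj ≫ hh =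
            (shiftEquiv C (1 : ℤ)).unitIso.inv.app B1.obj ≫ c' ≫ hh := fun hh =>
          (Category.assoc _ _ _).symm.trans
            ((congrArg (fun x => x ≫ hh) hnat').trans (Category.assoc _ _ _))
        exact (Category.assoc _ _ _).trans ((Category.assoc _ _ _).trans
          ((congrArg (fun x => (shiftFunctor C (-1 : ℤ)).map h3 ≫ x) (hA uu)).trans
          ((congrArg (fun x => (shiftFunctor C (-1 : ℤ)).map h3 ≫
            (shiftEquiv C (1 : ℤ)).unitIso.inv.app B1.obj ≫ x) h0).trans
          ((congrArg (fun x => (shiftFunctor C (-1 : ℤ)).map h3 ≫ x) comp_zero).trans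
            comp_zero))))
      exact key
    obtain ⟨vv, hvv⟩ : ∃ vv : Y.obj ⟶ Z, uu = j ≫ vv := yex₂ d5i uu hm1
    have hvv' : uu = j ≫ vv := hvv
    have hfv : f ≫ (ηX ≫ vv) = 0 := by
      rw [← Category.assoc, ← hc'j, Category.assoc, ← hvv', h0]
    obtain ⟨ee, hee⟩ := yex₂ d3 (ηX ≫ vv) hfv
    have hee2 : ηX ≫ vv = p ≫ ee := hee
    have hvθ : vv = θ ≫ ee := by
      refine cancel₃out d2 ?_ (van_t1 h21.1 hZ)
      show ηX ≫ vv = ηX ≫ θ ≫ ee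
      rw [← Category.assoc, ← hθ2]
      exact hee2
    rw [hvv', hvθ, ← Category.assoc]
    have hjθ : j ≫ θ = 0 := comp_distTriang_mor_zero₁₂ _ d5
    rw [hjθ, zero_comp]
  have hμf : homC (S.muApp i X) ≫ f = homC ((S.eps (i - 1)).app X) :=
    congrArg homC (S.muApp_eps i X)
  obtain ⟨v₀, hv₀1, hv₀2⟩ := cdtm
    dΔ d2 (𝟙 _) f
    (show homC (S.muApp i X) ≫ f = 𝟙 ((S.Wle (i - 1)).obj X).obj ≫ homC ((S.eps (i - 1)).app X)
      by rw [Category.id_comp]; exact hμf)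
  have hv₀1' : q ≫ v₀ = f ≫ ηX := hv₀1
  have hv₀2' : hΔ ≫ (𝟙 ((S.Wle (i - 1)).obj X).obj)⟦(1 : ℤ)⟧' = v₀ ≫ h2 := hv₀2
  have hv₀ : v₀ = v := by
    refine cancel₃out dΔ ?_ (van_t1 ((S.Wle (i - 1)).obj X).property.1 Y.property.2)
    show q ≫ v₀ = q ≫ v
    rw [hv₀1', hvq]
  have REL2 : hΔ = v ≫ h2 := by
    have h5 := hv₀2'
    rw [hv₀, CategoryTheory.Functor.map_id, Category.comp_id] at h5
    exact h5
  have lemM : ∀ (Z : C), Van Z ((R.obj⟦(-1 : ℤ)⟧ : C)) → ∀ z : Z ⟶ G.obj,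
      z ≫ homC α = 0 → z = 0 := by
    intro Z hvan z hz0
    have hzΔ : z ≫ hΔ = 0 := by
      rw [REL2, ← hαj, ← Category.assoc, ← Category.assoc, hz0, zero_comp, zero_comp]
    obtain ⟨z₁0, hz₁0⟩ := cyex₃ dΔ z hzΔ
    let z₁ : Z ⟶ B1.obj := z₁0
    have hz₁' : z = z₁ ≫ q := hz₁0
    have hz₁c : z₁ ≫ c' = 0 := by
      rw [hc', ← Category.assoc, ← hz₁']
      exact hz0
    have hz₁f : (z₁ ≫ f) ≫ ηX = 0 := by
      rw [Category.assoc, ← hc'j, ← Category.assoc, hz₁c, zero_comp]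
    obtain ⟨e, he⟩ := cyex₂ d2 (z₁ ≫ f) hz₁f
    have he2 : z₁ ≫ f = e ≫ homC ((S.eps (i - 1)).app X) := he
    have hkill : (z₁ - e ≫ homC (S.muApp i X)) ≫ f = 0 := by
      rw [Preadditive.sub_comp, Category.assoc, hμf, ← he2, sub_self]
    have hz₁e : z₁ - e ≫ homC (S.muApp i X) = 0 := kill₁in d3 _ hkill hvan
    have hz₁'' : z₁ = e ≫ homC (S.muApp i X) := by rwa [sub_eq_zero] at hz₁e
    rw [hz₁', hz₁'', Category.assoc]
    have hμq : homC (S.muApp i X) ≫ q = 0 := comp_distTriang_mor_zero₁₂ _ dΔ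
    rw [hμq, comp_zero]
  obtain ⟨Q, π, dq, dQ⟩ := Pretriangulated.distinguished_cocone_triangle c'
  have vanQ : ∀ (Z : C), Z ∈ t.ge → Van Q Z := by
    intro Z hZ u
    have h0 : c' ≫ (π ≫ u) = 0 := by
      rw [← Category.assoc]
      have hcπ : c' ≫ π = 0 := comp_distTriang_mor_zero₁₂ _ dQ
      rw [hcπ, zero_comp]
    have hπu : π ≫ u = 0 := lemI Z hZ _ h0
    obtain ⟨e, he⟩ := yex₃ dQ u hπu
    have he' : u = dq ≫ e := he
    rw [he', van_t1 B1.property.1 hZ e, comp_zero]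
  have dQi := inv_rot_of_distTriang _ dQ
  have hwq : (Triangle.mk c' π dq).invRotate.mor₁ ≫ q = 0 := by
    refine lemM _ (van_shift (vanQ R.obj R.property.2) (-1)) _ ?_
    refine (Category.assoc _ _ _).trans ?_
    have : q ≫ homC α = c' := hc'.symm
    refine (congrArg (fun x => (Triangle.mk c' π dq).invRotate.mor₁ ≫ x) this).trans ?_
    exact comp_distTriang_mor_zero₁₂ _ dQi
  obtain ⟨β0, hβ0⟩ := yex₂ dQi q hwq
  let β : G'.obj ⟶ G.obj := β0
  have hβ' : q = c' ≫ β := hβ0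
  have hαβ : homC α ≫ β = 𝟙 G.obj := by
    refine cancel₃out dΔ ?_ (van_t1 ((S.Wle (i - 1)).obj X).property.1 G.property.2)
    show q ≫ homC α ≫ β = q ≫ 𝟙 G.obj
    rw [Category.comp_id, ← Category.assoc, ← hc', ← hβ']
  have hβα : β ≫ homC α = 𝟙 G'.obj := by
    have h0 : c' ≫ (β ≫ homC α - 𝟙 G'.obj) = 0 := by
      rw [Preadditive.comp_sub, ← Category.assoc, ← hβ', Category.comp_id, hc', sub_self]
    have hres := lemI G'.obj G'.property.2 _ h0
    rwa [sub_eq_zero] at hres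
  refine ⟨α, ?_, isIso_of_homC α ⟨β, hαβ, hβα⟩⟩
  rw [← Category.assoc]
  exact hc'j

noncomputable def alphaApp (i : ℤ) (X : Heart t) :
    (S.Wge i).obj ((S.Wle i).obj X) ⟶ (S.Wle i).obj ((S.Wge i).obj X) :=
  (S.alpha_pack i X).choose

lemma alphaApp_spec (i : ℤ) (X : Heart t) :
    homC ((S.eta i).app ((S.Wle i).obj X)) ≫ homC (S.alphaApp i X) ≫
      homC ((S.eps i).app ((S.Wge i).obj X))
    = homC ((S.eps i).app X) ≫ homC ((S.eta i).app X) :=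
  (S.alpha_pack i X).choose_spec.1

lemma alphaApp_isIso (i : ℤ) (X : Heart t) : IsIso (S.alphaApp i X) :=
  (S.alpha_pack i X).choose_spec.2

lemma etaCancel (k : ℤ) (B : Heart t) {Z : Heart t} {u u' : (S.Wge k).obj B ⟶ Z}
    (h : (S.eta k).app B ≫ u = (S.eta k).app B ≫ u') : u = u' := by
  obtain ⟨hh1, _, hh3, h2, d2⟩ := S.hWge k B
  have hC : homC ((S.eta k).app B) ≫ (homC u : ((S.Wge k).obj B).obj ⟶ Z.obj)
      = homC ((S.eta k).app B) ≫ (homC u' : ((S.Wge k).obj B).obj ⟶ Z.obj) := congrArg homC h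
  exact ObjectProperty.hom_ext _ (cancel₃out d2 hC (van_t1 hh1.1 Z.property.2))

lemma alpha_natural (i : ℤ) {X X' : Heart t} (g : X ⟶ X') :
    S.alphaApp i X ≫ (S.Wle i).map ((S.Wge i).map g) =
    (S.Wge i).map ((S.Wle i).map g) ≫ S.alphaApp i X' := by
  have specX : (S.eta i).app ((S.Wle i).obj X) ≫ S.alphaApp i X ≫
      (S.eps i).app ((S.Wge i).obj X) = (S.eps i).app X ≫ (S.eta i).app X :=
    ObjectProperty.hom_ext _ (S.alphaApp_spec i X)
  have specX' : (S.eta i).app ((S.Wle i).obj X') ≫ S.alphaApp i X' ≫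
      (S.eps i).app ((S.Wge i).obj X') = (S.eps i).app X' ≫ (S.eta i).app X' :=
    ObjectProperty.hom_ext _ (S.alphaApp_spec i X')
  have n1 : (S.Wle i).map ((S.Wge i).map g) ≫ (S.eps i).app ((S.Wge i).obj X') =
      (S.eps i).app ((S.Wge i).obj X) ≫ (S.Wge i).map g := by
    simpa using (S.eps i).naturality ((S.Wge i).map g)
  have n2 : (S.eta i).app ((S.Wle i).obj X) ≫ (S.Wge i).map ((S.Wle i).map g) =
      (S.Wle i).map g ≫ (S.eta i).app ((S.Wle i).obj X') := by
    simpa using ((S.eta i).naturality ((S.Wle i).map g)).symm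
  have n3 : (S.eta i).app X ≫ (S.Wge i).map g = g ≫ (S.eta i).app X' := by
    simpa using ((S.eta i).naturality g).symm
  have n4 : (S.Wle i).map g ≫ (S.eps i).app X' = (S.eps i).app X ≫ g := by
    simpa using (S.eps i).naturality g
  refine S.epsCancel (S.G_wle_mem i X) ?_
  refine S.etaCancel i ((S.Wle i).obj X) ?_
  simp only [Category.assoc]
  rw [n1, reassoc_of% specX, n3, reassoc_of% n2, specX', reassoc_of% n4]

noncomputable def alphaIso (i : ℤ) : (S.Wle i ⋙ S.Wge i) ≅ (S.Wge i ⋙ S.Wle i) :=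
  NatIso.ofComponents
    (fun X => @asIso _ _ _ _ (S.alphaApp i X) (S.alphaApp_isIso i X))
    (fun g => by
      simpa using (S.alpha_natural i g).symm)

lemma Wle_map_zero (k : ℤ) {X Y : Heart t} : (S.Wle k).map (0 : X ⟶ Y) = 0 := by
  refine S.epsCancel (S.hWleMem k X) ?_
  have h := (S.eps k).naturality (0 : X ⟶ Y)
  rw [h]
  show (S.eps k).app X ≫ (𝟭 (Heart t)).map (0 : X ⟶ Y) = (0 : _ ⟶ (S.Wle k).obj Y) ≫ (S.eps k).app Y
  rw [CategoryTheory.Functor.id_map, Limits.comp_zero, Limits.zero_comp]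

lemma wleRowSES (k : ℤ) {A B Cc : Heart t} (u : A ⟶ B) (v : B ⟶ Cc)
    (hse : HeartSES t (homC u) (homC v)) :
    HeartSES t (homC ((S.Wle k).map u)) (homC ((S.Wle k).map v)) := by
  obtain ⟨hA, hB, hC, hS, dS⟩ := hse
  set A1 := (S.Wle k).obj A with hA1d
  set B1 := (S.Wle k).obj B with hB1d
  set C1 := (S.Wle k).obj Cc with hC1d
  set RA := (S.Wge (k + 1)).obj A with hRAd
  set RB := (S.Wge (k + 1)).obj B with hRBd
  set u1 : A1.obj ⟶ B1.obj := homC ((S.Wle k).map u) with hu1d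
  set v1 : B1.obj ⟶ C1.obj := homC ((S.Wle k).map v) with hv1d
  set εA : A1.obj ⟶ A.obj := homC ((S.eps k).app A) with hεAd
  set εB : B1.obj ⟶ B.obj := homC ((S.eps k).app B) with hεBd
  set εC : C1.obj ⟶ Cc.obj := homC ((S.eps k).app Cc) with hεCd
  obtain ⟨_, _, _, hA3, dA3⟩ := S.ses' k A
  obtain ⟨_, _, _, hB3, dB3⟩ := S.ses' k B
  have dA3r3 := rot_of_distTriang _ (rot_of_distTriang _ (rot_of_distTriang _ dA3))
  have dB3r3 := rot_of_distTriang _ (rot_of_distTriang _ (rot_of_distTriang _ dB3))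
  have natu : u1 ≫ εB = εA ≫ homC u := congrArg homC ((S.eps k).naturality u)
  have natv : v1 ≫ εC = εB ≫ homC v := congrArg homC ((S.eps k).naturality v)
  -- zero composite
  have huvH : u ≫ v = (0 : A ⟶ Cc) := ObjectProperty.hom_ext _ (comp_distTriang_mor_zero₁₂ _ dS)
  have hu1v1 : u1 ≫ v1 = 0 := by
    have : (S.Wle k).map u ≫ (S.Wle k).map v = 0 := by
      rw [← CategoryTheory.Functor.map_comp, huvH, S.Wle_map_zero]
    exact congrArg homC this
  -- cone of u1
  obtain ⟨K, k₁, d₁, dK⟩ := Pretriangulated.distinguished_cocone_triangle u1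
  have hu1k₁ : u1 ≫ k₁ = 0 := comp_distTriang_mor_zero₁₂ _ dK
  have hk₁d₁ : k₁ ≫ d₁ = 0 := comp_distTriang_mor_zero₂₃ _ dK
  have hd₁u1 : d₁ ≫ u1⟦(1 : ℤ)⟧' = 0 := comp_distTriang_mor_zero₃₁ _ dK
  obtain ⟨tt0, htt0⟩ := yex₂ dK v1 hu1v1
  let tt : K ⟶ C1.obj := tt0
  have htt' : v1 = k₁ ≫ tt := htt0
  -- δC
  have hzp : (εC ≫ hS) ≫ (homC ((S.eta (k + 1)).app A))⟦(1 : ℤ)⟧' = 0 := by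
    have hmem : ((RA.obj⟦(1 : ℤ)⟧ : C)) ∈ w.wge (k + 2) :=
      shiftClass_cast (by ring) (wge_shift_mem (S.Wge_mem (k + 1) A) 1)
    exact van_worth (by omega) (S.hWleMem k Cc) hmem _
  obtain ⟨δ0, hδ0⟩ : ∃ δ0 : C1.obj ⟶ (A1.obj⟦(1 : ℤ)⟧ : C),
      εC ≫ hS = δ0 ≫ (-(εA⟦(1 : ℤ)⟧')) := cyex₂ dA3r3 (εC ≫ hS) (by
    show (εC ≫ hS) ≫ (-((homC ((S.eta (k + 1)).app A))⟦(1 : ℤ)⟧')) = 0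
    rw [Preadditive.comp_neg, hzp, neg_zero])
  set δC : C1.obj ⟶ ((A1.obj⟦(1 : ℤ)⟧ : C)) := -δ0 with hδCd
  have hδ : δC ≫ εA⟦(1 : ℤ)⟧' = εC ≫ hS := by
    have h' : εC ≫ hS = δ0 ≫ (-(εA⟦(1 : ℤ)⟧')) := hδ0
    rw [hδCd, Preadditive.neg_comp, h', Preadditive.comp_neg]
  have hδu : δC ≫ u1⟦(1 : ℤ)⟧' = 0 := by
    have h1 : (δC ≫ u1⟦(1 : ℤ)⟧') ≫ εB⟦(1 : ℤ)⟧' = 0 := by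
      have hSu : hS ≫ (homC u)⟦(1 : ℤ)⟧' = 0 := comp_distTriang_mor_zero₃₁ _ dS
      calc (δC ≫ u1⟦(1 : ℤ)⟧') ≫ εB⟦(1 : ℤ)⟧'
          = δC ≫ (u1 ≫ εB)⟦(1 : ℤ)⟧' := by
            rw [Category.assoc, ← CategoryTheory.Functor.map_comp]
        _ = δC ≫ (εA ≫ homC u)⟦(1 : ℤ)⟧' := by rw [natu]
        _ = (δC ≫ εA⟦(1 : ℤ)⟧') ≫ (homC u)⟦(1 : ℤ)⟧' := by
            rw [CategoryTheory.Functor.map_comp, Category.assoc]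
        _ = εC ≫ (hS ≫ (homC u)⟦(1 : ℤ)⟧') := by rw [hδ, Category.assoc]
        _ = 0 := by rw [hSu, comp_zero]
    refine kill₁in dB3r3 _ ?_ ?_
    · show (δC ≫ u1⟦(1 : ℤ)⟧') ≫ (-(εB⟦(1 : ℤ)⟧')) = 0
      rw [Preadditive.comp_neg, h1, neg_zero]
    · exact van_of_iso (Iso.refl _) (sCancel 1 RB.obj)
        (van_worth (by omega) (S.hWleMem k Cc) (S.Wge_mem (k + 1) B))
  obtain ⟨s₀0, hs₀0⟩ := cyex₁ dK δC hδu
  let s₀ : C1.obj ⟶ K := s₀0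
  have hs₀' : δC = s₀ ≫ d₁ := hs₀0
  obtain ⟨ν0, hν10, hν20⟩ := cdtm
    dK dS εA εB natu
  let ν : K ⟶ Cc.obj := ν0
  have hν1' : k₁ ≫ ν = εB ≫ homC v := hν10
  have hν2' : d₁ ≫ εA⟦(1 : ℤ)⟧' = ν ≫ hS := hν20
  have httν : tt ≫ εC = ν := by
    refine cancel₃out dK ?_ (van_t1 A1.property.1 Cc.property.2)
    show k₁ ≫ (tt ≫ εC : K ⟶ Cc.obj) = k₁ ≫ ν
    rw [← Category.assoc, ← htt', hν1']
    exact natv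
  set ζ : C1.obj ⟶ Cc.obj := εC - s₀ ≫ ν with hζd
  have hζS : ζ ≫ hS = 0 := by
    rw [hζd, Preadditive.sub_comp, Category.assoc, ← hν2', ← Category.assoc, ← hs₀',
      hδ, sub_self]
  obtain ⟨y, hy⟩ := cyex₃ dS ζ hζS
  have hy' : ζ = y ≫ homC v := hy
  obtain ⟨z, hz⟩ := S.fac (X := B) (Y := C1) (S.hWleMem k Cc) (ObjectProperty.homMk y)
  have hzC : homC z ≫ εB = y := congrArg homC hz
  set s : C1.obj ⟶ K := s₀ + homC z ≫ k₁ with hsd0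
  have hsd : s ≫ d₁ = δC := by
    rw [hsd0, Preadditive.add_comp, Category.assoc, hk₁d₁, comp_zero, add_zero, ← hs₀']
  have hsν : s ≫ ν = εC := by
    rw [hsd0, Preadditive.add_comp, Category.assoc, hν1', ← Category.assoc, hzC, ← hy', hζd]
    abel
  have hstC : s ≫ tt = 𝟙 C1.obj := by
    have hh : (s ≫ tt) ≫ εC = 𝟙 C1.obj ≫ εC := by
      rw [Category.assoc, httν, hsν, Category.id_comp]
    exact congrArg homC (S.epsCancel (g := ObjectProperty.homMk (s ≫ tt)) (g' := 𝟙 C1)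
      (S.hWleMem k Cc) (ObjectProperty.hom_ext _ hh))
  set ψ : B1.obj ⟶ K := k₁ - v1 ≫ s with hψd0
  have hψν : ψ ≫ ν = 0 := by
    rw [hψd0, Preadditive.sub_comp, hν1', Category.assoc, hsν, natv, sub_self]
  have hvδ : v1 ≫ δC = 0 := by
    have h2 : (v1 ≫ δC) ≫ εA⟦(1 : ℤ)⟧' = 0 := by
      have hvS : homC v ≫ hS = 0 := comp_distTriang_mor_zero₂₃ _ dS
      rw [Category.assoc, hδ, ← Category.assoc, natv, Category.assoc, hvS, comp_zero]
    refine kill₁in dA3r3 _ ?_ ?_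
    · show (v1 ≫ δC) ≫ (-(εA⟦(1 : ℤ)⟧')) = 0
      rw [Preadditive.comp_neg, h2, neg_zero]
    · exact van_of_iso (Iso.refl _) (sCancel 1 RA.obj)
        (van_worth (by omega) (S.hWleMem k B) (S.Wge_mem (k + 1) A))
  have hψdd : ψ ≫ d₁ = 0 := by
    rw [hψd0, Preadditive.sub_comp, hk₁d₁, Category.assoc, hsd, hvδ, sub_zero]
  obtain ⟨ψ₁0, hψ₁0⟩ := cyex₃ dK ψ hψdd
  let ψ₁ : B1.obj ⟶ B1.obj := ψ₁0
  have hψ₁' : ψ = ψ₁ ≫ k₁ := hψ₁0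
  have hψ₁v : (ψ₁ ≫ εB) ≫ homC v = 0 := by
    have h3 : ψ₁ ≫ (k₁ ≫ ν) = 0 := by rw [← Category.assoc, ← hψ₁', hψν]
    rw [hν1'] at h3
    rw [Category.assoc]
    exact h3
  obtain ⟨ξ, hξ⟩ := cyex₂ dS (ψ₁ ≫ εB) hψ₁v
  have hξ' : ψ₁ ≫ εB = ξ ≫ homC u := hξ
  obtain ⟨ξh, hξh⟩ := S.fac (X := A) (Y := B1) (S.hWleMem k B) (ObjectProperty.homMk ξ)
  have hξhC : homC ξh ≫ εA = ξ := congrArg homC hξh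
  have hψ₁e : ψ₁ = homC ξh ≫ u1 := by
    have hh : ψ₁ ≫ εB = (homC ξh ≫ u1) ≫ εB := by
      rw [hξ', Category.assoc, natu, ← Category.assoc, hξhC]
    exact congrArg homC (S.epsCancel (g := ObjectProperty.homMk ψ₁)
      (g' := ObjectProperty.homMk (homC ξh ≫ u1)) (S.hWleMem k B) (ObjectProperty.hom_ext _ hh))
  have hψ0 : ψ = 0 := by
    rw [hψ₁', hψ₁e, Category.assoc, hu1k₁, comp_zero]
  have hk₁vs : k₁ = v1 ≫ s := by
    have h9 : k₁ - v1 ≫ s = 0 := hψ0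
    have := sub_eq_zero.mp h9
    exact this
  have hvanA1K : Van ((A1.obj⟦(1 : ℤ)⟧ : C)) K := by
    intro e
    have h1 : (e ≫ d₁) ≫ u1⟦(1 : ℤ)⟧' = 0 := by
      rw [Category.assoc, hd₁u1, comp_zero]
    obtain ⟨χ, hχ⟩ := (shiftFunctor C (1 : ℤ)).map_surjective (e ≫ d₁)
    have hχu : χ ≫ u1 = 0 := by
      apply (shiftFunctor C (1 : ℤ)).map_injective
      rw [CategoryTheory.Functor.map_comp, hχ, CategoryTheory.Functor.map_zero]
      exact h1
    have hχ0 : χ = 0 := by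
      have hx : (χ ≫ εA) ≫ homC u = 0 := by
        rw [Category.assoc, ← natu, ← Category.assoc, hχu, zero_comp]
      have h5 := kill₁in dS (χ ≫ εA) hx (van_t2 A1.property.1 Cc.property.2)
      have h6 : χ ≫ εA = (0 : A1.obj ⟶ A1.obj) ≫ εA := by
        exact h5.trans Limits.zero_comp.symm
      exact congrArg homC (S.epsCancel (g := ObjectProperty.homMk χ) (g' := 0)
        (S.hWleMem k A) (ObjectProperty.hom_ext _ h6))
    have hed : e ≫ d₁ = 0 := by
      rw [← hχ, hχ0, CategoryTheory.Functor.map_zero]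
    obtain ⟨e₂, he₂⟩ := cyex₃ dK e hed
    rw [he₂, van_t1 A1.property.1 B1.property.2 e₂, zero_comp]
  have hts : tt ≫ s = 𝟙 K := by
    have hφk : k₁ ≫ (𝟙 K - tt ≫ s) = 0 := by
      rw [Preadditive.comp_sub, Category.comp_id, ← Category.assoc, ← htt', ← hk₁vs,
        sub_self]
    obtain ⟨e, he⟩ := yex₃ dK (𝟙 K - tt ≫ s) hφk
    have h11 : 𝟙 K - tt ≫ s = 0 := by rw [he, hvanA1K e, comp_zero]
    have h10 := sub_eq_zero.mp h11
    exact h10.symm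
  refine ⟨A1.property, B1.property, C1.property, δC, ?_⟩
  refine Pretriangulated.isomorphic_distinguished _ dK _ ?_
  refine Triangle.isoMk _ _ (Iso.refl _) (Iso.refl _) (Iso.mk s tt hstC hts) ?_ ?_ ?_
  · show u1 ≫ 𝟙 B1.obj = 𝟙 A1.obj ≫ u1
    rw [Category.comp_id, Category.id_comp]
  · show v1 ≫ s = 𝟙 B1.obj ≫ k₁
    rw [Category.id_comp, ← hk₁vs]
  · show δC ≫ (𝟙 A1.obj)⟦(1 : ℤ)⟧' = s ≫ d₁
    rw [CategoryTheory.Functor.map_id, Category.comp_id]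
    exact hsd.symm

lemma Wge_map_zero (k : ℤ) {X Y : Heart t} : (S.Wge k).map (0 : X ⟶ Y) = 0 := by
  refine S.etaCancel k X ?_
  have h := (S.eta k).naturality (0 : X ⟶ Y)
  rw [← h]
  show (𝟭 (Heart t)).map (0 : X ⟶ Y) ≫ (S.eta k).app Y = (S.eta k).app X ≫ 0
  rw [CategoryTheory.Functor.id_map, Limits.comp_zero, Limits.zero_comp]

lemma grRowSES (i : ℤ) {A B Cc : Heart t} (u : A ⟶ B) (v : B ⟶ Cc)
    (hse : HeartSES t (homC u) (homC v)) :
    HeartSES t (homC ((S.Wge i).map ((S.Wle i).map u)))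
      (homC ((S.Wge i).map ((S.Wle i).map v))) := by
  obtain ⟨_, _, _, hW, dW⟩ := S.wleRowSES i u v hse
  set A1 := (S.Wle i).obj A with hA1d
  set B1 := (S.Wle i).obj B with hB1d
  set C1 := (S.Wle i).obj Cc with hC1d
  set GA := (S.Wge i).obj A1 with hGAd
  set GB := (S.Wge i).obj B1 with hGBd
  set GC := (S.Wge i).obj C1 with hGCd
  set u1 : A1.obj ⟶ B1.obj := homC ((S.Wle i).map u) with hu1d
  set v1 : B1.obj ⟶ C1.obj := homC ((S.Wle i).map v) with hv1d
  set Gu : GA.obj ⟶ GB.obj := homC ((S.Wge i).map ((S.Wle i).map u)) with hGud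
  set Gv : GB.obj ⟶ GC.obj := homC ((S.Wge i).map ((S.Wle i).map v)) with hGvd
  set qA : A1.obj ⟶ GA.obj := homC ((S.eta i).app A1) with hqAd
  set qB : B1.obj ⟶ GB.obj := homC ((S.eta i).app B1) with hqBd
  set qC : C1.obj ⟶ GC.obj := homC ((S.eta i).app C1) with hqCd
  have natu : u1 ≫ qB = qA ≫ Gu := by
    have h := (S.eta i).naturality ((S.Wle i).map u)
    exact congrArg homC h
  have natv : v1 ≫ qC = qB ≫ Gv := by
    have h := (S.eta i).naturality ((S.Wle i).map v)
    exact congrArg homC h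
  obtain ⟨_, _, _, hΔA, dΔA⟩ := S.delta i A
  obtain ⟨_, _, _, hΔB, dΔB⟩ := S.delta i B
  obtain ⟨_, _, _, hΔC, dΔC⟩ := S.delta i Cc
  have hu1v1H : (S.Wle i).map u ≫ (S.Wle i).map v = 0 :=
    ObjectProperty.hom_ext _ (comp_distTriang_mor_zero₁₂ _ dW)
  have hGuGv : Gu ≫ Gv = 0 := by
    have h : (S.Wge i).map ((S.Wle i).map u) ≫ (S.Wge i).map ((S.Wle i).map v) = 0 := by
      rw [← CategoryTheory.Functor.map_comp, hu1v1H, S.Wge_map_zero]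
    exact congrArg homC h
  obtain ⟨K, kk, dd, dK⟩ := Pretriangulated.distinguished_cocone_triangle Gu
  have hGukk : Gu ≫ kk = 0 := comp_distTriang_mor_zero₁₂ _ dK
  have hkkdd : kk ≫ dd = 0 := comp_distTriang_mor_zero₂₃ _ dK
  have hddGu : dd ≫ Gu⟦(1 : ℤ)⟧' = 0 := comp_distTriang_mor_zero₃₁ _ dK
  obtain ⟨t₁0, ht₁0⟩ := yex₂ dK Gv hGuGv
  let t₁ : K ⟶ GC.obj := t₁0
  have ht₁ : Gv = kk ≫ t₁ := ht₁0
  have hKge : K ∈ w.wge i := by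
    refine ext_wge (rot_of_distTriang _ dK) (S.Wge_mem i B1) ?_
    exact wge_anti (a := i) (b := i + 1) (by omega)
      (shiftClass_cast (by ring) (wge_shift_mem (S.Wge_mem i A1) 1))
  -- w-map
  have hpre : u1 ≫ (qB ≫ kk) = 0 := by
    rw [← Category.assoc, natu, Category.assoc, hGukk, comp_zero]
  obtain ⟨w0, hw0⟩ := yex₂ dW (qB ≫ kk) hpre
  let ww : C1.obj ⟶ K := w0
  have hw : qB ≫ kk = v1 ≫ ww := hw0
  have hμw : homC (S.muApp i Cc) ≫ ww = 0 :=
    van_worth (a := i - 1) (b := i) (by omega) (S.hWleMem (i - 1) Cc) hKge _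
  obtain ⟨s₁0, hs₁0⟩ := yex₂ dΔC ww hμw
  let s₁ : GC.obj ⟶ K := s₁0
  have hs₁ : ww = qC ≫ s₁ := hs₁0
  have hwt : ww ≫ t₁ = qC := by
    refine cancel₃out dW ?_ (van_t1 A1.property.1 GC.property.2)
    show v1 ≫ (ww ≫ t₁) = v1 ≫ qC
    rw [← Category.assoc, ← hw, Category.assoc, ← ht₁, natv]
  have hs₁t₁ : s₁ ≫ t₁ = 𝟙 GC.obj := by
    refine cancel₃out dΔC ?_
      (van_t1 ((S.Wle (i - 1)).obj Cc).property.1 GC.property.2)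
    show qC ≫ (s₁ ≫ t₁) = qC ≫ 𝟙 GC.obj
    rw [Category.comp_id, ← Category.assoc, ← hs₁, hwt]
  -- kk = Gv ≫ s₁
  have hψ : kk = Gv ≫ s₁ := by
    have h0 : qB ≫ (kk - Gv ≫ s₁) = 0 := by
      rw [Preadditive.comp_sub, hw, ← Category.assoc, ← natv, Category.assoc, ← hs₁,
        sub_self]
    have hvanB : Van (((S.Wle (i - 1)).obj B).obj⟦(1 : ℤ)⟧ : C) K := by
      refine van_into₃ dK ?_ ?_
      · exact van_t1 ((S.Wle (i - 1)).obj B).property.1 GB.property.2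
      · exact van_shift
          (van_worth (a := i - 1) (b := i) (by omega) (S.hWleMem (i - 1) B)
            (S.Wge_mem i A1)) 1
    have h1 := kill₃out dΔB _ h0 hvanB
    have h2 := sub_eq_zero.mp h1
    exact h2
  -- retraction of Gu
  have hvanC1GA : Van ((C1.obj⟦(-1 : ℤ)⟧ : C)) GA.obj := by
    refine van_unshift ?_
    exact van_worth (a := i) (b := i + 1) (by omega) (S.hWleMem i Cc)
      (shiftClass_cast (by ring) (wge_shift_mem (S.Wge_mem i A1) 1))
  have dWi := inv_rot_of_distTriang _ dW
  obtain ⟨y0, hy0⟩ := yex₂ dWi qA (hvanC1GA _)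
  let y : B1.obj ⟶ GA.obj := y0
  have hy : qA = u1 ≫ y := hy0
  have hμBy : homC (S.muApp i B) ≫ y = 0 :=
    van_worth (a := i - 1) (b := i) (by omega) (S.hWleMem (i - 1) B) (S.Wge_mem i A1) _
  obtain ⟨ρ0, hρ0⟩ := yex₂ dΔB y hμBy
  let rr : GB.obj ⟶ GA.obj := ρ0
  have hρ : y = qB ≫ rr := hρ0
  have hGuρ : Gu ≫ rr = 𝟙 GA.obj := by
    refine cancel₃out dΔA ?_
      (van_t1 ((S.Wle (i - 1)).obj A).property.1 GA.property.2)
    show qA ≫ (Gu ≫ rr) = qA ≫ 𝟙 GA.obj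
    rw [Category.comp_id, ← Category.assoc, ← natu, Category.assoc, ← hρ, ← hy]
  -- Hom(GA⟦1⟧, K) = 0
  have hvanGA1K : Van ((GA.obj⟦(1 : ℤ)⟧ : C)) K := by
    intro e
    have h1 : (e ≫ dd) ≫ Gu⟦(1 : ℤ)⟧' = 0 := by
      rw [Category.assoc, hddGu, comp_zero]
    obtain ⟨χ, hχ⟩ := (shiftFunctor C (1 : ℤ)).map_surjective (e ≫ dd)
    have hχu : χ ≫ Gu = 0 := by
      apply (shiftFunctor C (1 : ℤ)).map_injective
      rw [CategoryTheory.Functor.map_comp, hχ, CategoryTheory.Functor.map_zero]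
      exact h1
    have hχ0 : χ = 0 := by
      have : χ = (χ ≫ Gu) ≫ rr := by rw [Category.assoc, hGuρ, Category.comp_id]
      rw [this, hχu, zero_comp]
    have hed : e ≫ dd = 0 := by
      rw [← hχ, hχ0, CategoryTheory.Functor.map_zero]
    obtain ⟨e₂, he₂⟩ := cyex₃ dK e hed
    rw [he₂, van_t1 GA.property.1 GB.property.2 e₂, zero_comp]
  have ht₁s₁ : t₁ ≫ s₁ = 𝟙 K := by
    have hφk : kk ≫ (𝟙 K - t₁ ≫ s₁) = 0 := by
      rw [Preadditive.comp_sub, Category.comp_id, ← Category.assoc, ← ht₁, ← hψ, sub_self]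
    obtain ⟨e, he⟩ := yex₃ dK (𝟙 K - t₁ ≫ s₁) hφk
    have h11 : 𝟙 K - t₁ ≫ s₁ = 0 := by rw [he, hvanGA1K e, comp_zero]
    have h10 := sub_eq_zero.mp h11
    exact h10.symm
  refine ⟨GA.property, GB.property, GC.property, s₁ ≫ dd, ?_⟩
  refine Pretriangulated.isomorphic_distinguished _ dK _ ?_
  refine Triangle.isoMk _ _ (Iso.refl _) (Iso.refl _) (Iso.mk s₁ t₁ hs₁t₁ ht₁s₁) ?_ ?_ ?_
  · show Gu ≫ 𝟙 GB.obj = 𝟙 GA.obj ≫ Gu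
    rw [Category.comp_id, Category.id_comp]
  · show Gv ≫ s₁ = 𝟙 GB.obj ≫ kk
    rw [Category.id_comp, ← hψ]
  · show (s₁ ≫ dd) ≫ (𝟙 GA.obj)⟦(1 : ℤ)⟧' = s₁ ≫ dd
    rw [CategoryTheory.Functor.map_id, Category.comp_id]

end Ctx

lemma heartExact_of_iso {t : BoundedTStructure C} {F F' : Heart t ⥤ Heart t} (Θ : F ≅ F')
    (hF : HeartExact t F) : HeartExact t F' := by
  intro X Y Z f g hses
  obtain ⟨h1, h2, h3, hh, hd⟩ := hF X Y Z f g hses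
  refine ⟨(F'.obj X).property, (F'.obj Y).property, (F'.obj Z).property,
    homC (Θ.inv.app Z) ≫ hh ≫ (homC (Θ.hom.app X))⟦(1 : ℤ)⟧', ?_⟩
  refine Pretriangulated.isomorphic_distinguished _ hd _ ?_
  have mkIso : ∀ W : Heart t, F'.obj W ≅ F.obj W := fun W => ⟨Θ.inv.app W, Θ.hom.app W,
    Θ.inv_hom_id_app W, Θ.hom_inv_id_app W⟩
  refine Triangle.isoMk _ _
    (Iso.mk (homC (Θ.inv.app X)) (homC (Θ.hom.app X))
      (congrArg homC (Θ.inv_hom_id_app X)) (congrArg homC (Θ.hom_inv_id_app X)))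
    (Iso.mk (homC (Θ.inv.app Y)) (homC (Θ.hom.app Y))
      (congrArg homC (Θ.inv_hom_id_app Y)) (congrArg homC (Θ.hom_inv_id_app Y)))
    (Iso.mk (homC (Θ.inv.app Z)) (homC (Θ.hom.app Z))
      (congrArg homC (Θ.inv_hom_id_app Z)) (congrArg homC (Θ.hom_inv_id_app Z))) ?_ ?_ ?_
  · exact congrArg homC (Θ.inv.naturality f)
  · exact congrArg homC (Θ.inv.naturality g)
  · show (homC (Θ.inv.app Z) ≫ hh ≫ (homC (Θ.hom.app X))⟦(1 : ℤ)⟧') ≫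
      (homC (Θ.inv.app X))⟦(1 : ℤ)⟧' = homC (Θ.inv.app Z) ≫ hh
    rw [Category.assoc, Category.assoc, ← CategoryTheory.Functor.map_comp]
    have hx : homC (Θ.hom.app X) ≫ homC (Θ.inv.app X) = 𝟙 (F.obj X).obj :=
      congrArg homC (Θ.hom_inv_id_app X)
    rw [hx, CategoryTheory.Functor.map_id, Category.comp_id]

end Main

/-- Proposition 1.1(III1): under condition (iv), with `W_{≤i}` the right adjoints to
the inclusions `Heart(t) ∩ C^{w≤i} → Heart(t)` (encoded as endofunctors `Wle i` with
counits `ε i`) and `W_{≥i}X := X/W_{≤i-1}X` (encoded as endofunctors `Wge i` with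
units `η i`), the functors `Gr_i = W_{≥i} ∘ W_{≤i}` and `Gr_i' = W_{≤i} ∘ W_{≥i}` are
isomorphic exact endofunctors of the heart, take values in `A_i = Heart(t) ∩ C^{w=i}`,
restrict to the identity on `A_i`, and `Gr_i X ≅ W_{≤i}X / W_{≤i-1}X` naturally. -/
theorem graded_pieces_functors (w : BoundedWeightStructure C)
    (t : BoundedTStructure C) (h4 : ConditionIV w t)
    (Wle : ℤ → (Heart t ⥤ Heart t)) (ε : ∀ i : ℤ, Wle i ⟶ 𝟭 (Heart t))
    (hWleMem : ∀ (i : ℤ) (X : Heart t), ((Wle i).obj X).obj ∈ w.wle i)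
    (hWleAdj : ∀ (i : ℤ) (Y X : Heart t), Y.obj ∈ w.wle i → ∀ f : Y ⟶ X,
      ∃! g : Y ⟶ (Wle i).obj X, g ≫ (ε i).app X = f)
    (Wge : ℤ → (Heart t ⥤ Heart t)) (η : ∀ i : ℤ, 𝟭 (Heart t) ⟶ Wge i)
    (hWge : ∀ (i : ℤ) (X : Heart t),
      HeartSES t (homC ((ε (i - 1)).app X)) (homC ((η i).app X)))
    (i : ℤ) :
    Nonempty ((Wle i ⋙ Wge i) ≅ (Wge i ⋙ Wle i)) ∧
    HeartExact t (Wle i ⋙ Wge i) ∧ HeartExact t (Wge i ⋙ Wle i) ∧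
    (∀ X : Heart t, ((Wle i ⋙ Wge i).obj X).obj ∈ w.wle i ∧
      ((Wle i ⋙ Wge i).obj X).obj ∈ w.wge i ∧
      ((Wge i ⋙ Wle i).obj X).obj ∈ w.wle i ∧
      ((Wge i ⋙ Wle i).obj X).obj ∈ w.wge i) ∧
    (∀ X : Heart t, X.obj ∈ w.wle i → X.obj ∈ w.wge i →
      IsIso ((ε i).app X) ∧ IsIso ((η i).app X)) ∧
    (∃ μ : Wle (i - 1) ⟶ Wle i,
      (∀ X : Heart t, μ.app X ≫ (ε i).app X = (ε (i - 1)).app X) ∧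
      ∀ X : Heart t,
        HeartSES t (homC (μ.app X)) (homC ((η i).app ((Wle i).obj X)))) := by
  let S : Ctx w t := ⟨h4, Wle, ε, hWleMem, hWleAdj, Wge, η, hWge⟩
  refine ⟨⟨S.alphaIso i⟩, ?_, ?_, ?_, ?_, ?_⟩
  · intro X Y Z f g hses
    exact S.grRowSES i f g hses
  · refine heartExact_of_iso (S.alphaIso i) ?_
    intro X Y Z f g hses
    exact S.grRowSES i f g hses
  · intro X
    exact ⟨S.G_wle_mem i X, S.Wge_mem i ((S.Wle i).obj X), S.hWleMem i ((S.Wge i).obj X),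
      S.Wle_wge_mem i (S.Wge_mem i X)⟩
  · intro X hle hge
    exact ⟨S.eps_iso hle, S.eta_iso hge⟩
  · exact ⟨S.muNat i, fun X => S.muApp_eps i X, fun X => S.delta i X⟩

end WT
end

section
/- Let C be a triangulated category carrying a bounded weight structure w and a bounded t-structure t satisfying condition (iv) of Theorem 1.1 (for every X ∈ Heart(t) and every i ∈ ℤ there exists a nice weight decomposition of X at level i). Let W_{≤i} be the right adjoint to the inclusion Heart(t) ∩ C^{w≤i} → Heart(t), W_{≥i}X := X / W_{≤i−1}X, and Gr_jX := W_{≥j}(W_{≤j}X). Then for every X ∈ Heart(t) and every i ∈ ℤ: X ∈ C^{w≤i} if and only if Gr_jX = 0 for all j > i, and X ∈ C^{w≥i} if and only if Gr_jX = 0 for all j < i. -/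
open CategoryTheory CategoryTheory.Limits CategoryTheory.Pretriangulated

universe v u

namespace WT

variable (C : Type u) [Category.{v} C] [Preadditive C] [HasZeroObject C]
  [HasShift C ℤ] [∀ n : ℤ, (shiftFunctor C n).Additive] [Pretriangulated C]
variable [HasBinaryBiproducts C]

section Aux

variable {C}

lemma shiftClass_iso_closed {D : Set C} {n : ℤ} {X Y : C} (e : X ≅ Y)
    (hX : X ∈ shiftClass C D n) : Y ∈ shiftClass C D n := by
  obtain ⟨Z, hZ, ⟨e'⟩⟩ := hX
  exact ⟨Z, hZ, ⟨e.symm ≪≫ e'⟩⟩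

lemma mem_le_of_iso (w : BoundedWeightStructure C) {X Y : C} (e : X ≅ Y)
    (h : Y ∈ w.le) : X ∈ w.le :=
  w.le_retract ⟨e.hom, e.inv, e.hom_inv_id⟩ h

lemma isZero_shift {Z : C} (hZ : IsZero Z) (k : ℤ) : IsZero (Z⟦k⟧ : C) := by
  rw [IsZero.iff_id_eq_zero] at hZ ⊢
  rw [← (shiftFunctor C k).map_id, hZ, Functor.map_zero]

lemma isZero_mem_wle (w : BoundedWeightStructure C) (k : ℤ) {Z : C} (hZ : IsZero Z) :
    Z ∈ w.wle k := by
  obtain ⟨A, B, f, g, h, hdt, hA, hB⟩ := w.decomp Z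
  have hZle : Z ∈ w.le := w.le_retract ⟨(0 : Z ⟶ A), 0, (hZ.eq_of_src _ _)⟩ hA
  exact ⟨Z, hZle, ⟨hZ.iso (isZero_shift hZ k)⟩⟩

lemma wle_mono_s7 (w : BoundedWeightStructure C) {i j : ℤ} (h : i ≤ j) :
    w.wle i ⊆ w.wle j := by
  refine Int.le_induction (motive := fun j _ => w.wle i ⊆ w.wle j) subset_rfl ?_ j h
  intro n _ hn X hX
  obtain ⟨Y, hY, ⟨e⟩⟩ := hn hX
  exact ⟨Y⟦(-1 : ℤ)⟧, w.le_shift Y hY,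
    ⟨e ≪≫ (shiftFunctorAdd' C (-1) (n + 1) n (by ring)).app Y⟩⟩

lemma wge_anti_s7 (w : BoundedWeightStructure C) {i j : ℤ} (h : j ≤ i) :
    w.wge i ⊆ w.wge j := by
  refine Int.le_induction (motive := fun i _ => w.wge i ⊆ w.wge j) subset_rfl ?_ i h
  intro n _ hn X hX
  refine hn ?_
  obtain ⟨Y, hY, ⟨e⟩⟩ := hX
  exact ⟨Y⟦(1 : ℤ)⟧, w.ge_shift Y hY,
    ⟨e ≪≫ (shiftFunctorAdd' C 1 n (n + 1) (by ring)).app Y⟩⟩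

lemma wge_retract (w : BoundedWeightStructure C) {X B : C}
    (hr : ∃ (s : X ⟶ B) (r : B ⟶ X), s ≫ r = 𝟙 X) {i : ℤ} (hB : B ∈ w.wge i) :
    X ∈ w.wge i := by
  obtain ⟨s, r, hsr⟩ := hr
  obtain ⟨B', hB', ⟨eB⟩⟩ := hB
  let u : (B⟦(-i : ℤ)⟧ : C) ≅ B' :=
    (shiftFunctor C (-i)).mapIso eB ≪≫ (shiftFunctorCompIsoId C i (-i) (by ring)).app B'
  have hmem : (X⟦(-i : ℤ)⟧ : C) ∈ w.ge := by
    refine w.ge_retract ⟨(shiftFunctor C (-i)).map s ≫ u.hom,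
      u.inv ≫ (shiftFunctor C (-i)).map r, ?_⟩ hB'
    rw [Category.assoc, u.hom_inv_id_assoc, ← (shiftFunctor C (-i)).map_comp, hsr,
      (shiftFunctor C (-i)).map_id]
  exact ⟨X⟦(-i : ℤ)⟧, hmem,
    ⟨((shiftFunctorCompIsoId C (-i) i (by ring)).app X).symm⟩⟩

lemma wle_wge_orth (w : BoundedWeightStructure C) {i j : ℤ} (hij : i < j)
    {A B : C} (hA : A ∈ w.wle i) (hB : B ∈ w.wge j) (f : A ⟶ B) : f = 0 := by
  have hB' : B ∈ w.wge (i + 1) := wge_anti_s7 w (by omega) hB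
  obtain ⟨A', hA', ⟨eA⟩⟩ := hA
  obtain ⟨B', hB'', ⟨eB⟩⟩ := hB'
  set f' : (A'⟦i⟧ : C) ⟶ (B'⟦(i + 1 : ℤ)⟧ : C) := eA.inv ≫ f ≫ eB.hom with hf'
  let a : ((A'⟦i⟧ : C)⟦(-i : ℤ)⟧ : C) ≅ A' := (shiftFunctorCompIsoId C i (-i) (by ring)).app A'
  let b : ((B'⟦(i + 1 : ℤ)⟧ : C)⟦(-i : ℤ)⟧ : C) ≅ (B'⟦(1 : ℤ)⟧ : C) :=
    (shiftFunctorAdd' C (i + 1) (-i) 1 (by ring)).symm.app B'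
  have horth := w.orth A' hA' B' hB''
    (a.inv ≫ (shiftFunctor C (-i)).map f' ≫ b.hom)
  have hmap : (shiftFunctor C (-i)).map f' = 0 := by
    have : a.hom ≫ (a.inv ≫ (shiftFunctor C (-i)).map f' ≫ b.hom) ≫ b.inv =
        (shiftFunctor C (-i)).map f' := by simp
    rw [← this, horth, zero_comp, comp_zero]
  have hf'0 : f' = 0 := (shiftFunctor C (-i)).map_injective (by rw [hmap, Functor.map_zero])
  have : f = eA.hom ≫ f' ≫ eB.inv := by rw [hf']; simp
  rw [this, hf'0, zero_comp, comp_zero]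

end Aux

/-- Proposition 1.1(III2): under condition (iv), for `X` in the heart of `t`,
`X ∈ C^{w≤i}` iff `Gr_j X = 0` for all `j > i`, and `X ∈ C^{w≥i}` iff `Gr_j X = 0`
for all `j < i`, where `Gr_j = W_{≥j} ∘ W_{≤j}`. -/
theorem weight_classes_via_graded_pieces (w : BoundedWeightStructure C)
    (t : BoundedTStructure C) (h4 : ConditionIV w t)
    (Wle : ℤ → (Heart t ⥤ Heart t)) (ε : ∀ i : ℤ, Wle i ⟶ 𝟭 (Heart t))
    (hWleMem : ∀ (i : ℤ) (X : Heart t), ((Wle i).obj X).obj ∈ w.wle i)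
    (hWleAdj : ∀ (i : ℤ) (Y X : Heart t), Y.obj ∈ w.wle i → ∀ f : Y ⟶ X,
      ∃! g : Y ⟶ (Wle i).obj X, g ≫ (ε i).app X = f)
    (Wge : ℤ → (Heart t ⥤ Heart t)) (η : ∀ i : ℤ, 𝟭 (Heart t) ⟶ Wge i)
    (hWge : ∀ (i : ℤ) (X : Heart t),
      HeartSES t (homC ((ε (i - 1)).app X)) (homC ((η i).app X)))
    (i : ℤ) (X : Heart t) :
    (X.obj ∈ w.wle i ↔ ∀ j : ℤ, i < j → IsZero ((Wle j ⋙ Wge j).obj X)) ∧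
    (X.obj ∈ w.wge i ↔ ∀ j : ℤ, j < i → IsZero ((Wle j ⋙ Wge j).obj X)) := by
  classical
  -- transfer of `IsZero` between the heart and `C`
  have heartIsZero_of : ∀ (Y : Heart t), IsZero Y.obj → IsZero Y := by
    intro Y h
    rw [IsZero.iff_id_eq_zero]
    exact InducedCategory.hom_ext (h.eq_of_src _ _)
  have heartIsZero_to : ∀ (Y : Heart t), IsZero Y → IsZero Y.obj := by
    intro Y h
    rw [IsZero.iff_id_eq_zero]
    exact congrArg (fun f : Y ⟶ Y => f.hom) (h.eq_of_src (𝟙 Y) 0)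
  -- transfer of `IsIso` between the heart and `C`
  have heartIsIso_to : ∀ (Y Z : Heart t) (f : Y ⟶ Z), IsIso f → IsIso (homC f) := by
    intro Y Z f hf
    obtain ⟨g, hg1, hg2⟩ := hf.out
    exact ⟨homC g, congrArg (fun f : Y ⟶ Y => f.hom) hg1, congrArg (fun f : Z ⟶ Z => f.hom) hg2⟩
  -- the counit is an isomorphism on objects of `C^{w ≤ k}`
  have epsIso : ∀ (k : ℤ) (Y : Heart t), Y.obj ∈ w.wle k → IsIso ((ε k).app Y) := by
    intro k Y hY
    obtain ⟨g, hg, -⟩ := hWleAdj k Y Y hY (𝟙 Y)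
    obtain ⟨g', -, huniq⟩ := hWleAdj k ((Wle k).obj Y) Y (hWleMem k Y) ((ε k).app Y)
    refine ⟨g, ?_, hg⟩
    have h1 : ((ε k).app Y ≫ g) ≫ (ε k).app Y = (ε k).app Y := by
      rw [Category.assoc, hg]
      simp
    exact (huniq _ h1).trans (huniq _ (Category.id_comp _)).symm
  -- if the counit at `Y` vanishes then `W_{≤ k} Y = 0`
  have idZeroOfEpsZero : ∀ (k : ℤ) (Y : Heart t), (ε k).app Y = 0 →
      IsZero ((Wle k).obj Y) := by
    intro k Y hz
    obtain ⟨g', -, huniq⟩ := hWleAdj k ((Wle k).obj Y) Y (hWleMem k Y) ((ε k).app Y)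
    rw [IsZero.iff_id_eq_zero]
    exact (huniq _ (Category.id_comp _)).trans (huniq 0 (by simp [hz])).symm
  -- if `Y ∈ C^{w ≥ k+1}` then `W_{≤ k} Y = 0`
  have zeroWle : ∀ (k : ℤ) (Y : Heart t), Y.obj ∈ w.wge (k + 1) →
      IsZero ((Wle k).obj Y) := by
    intro k Y hY
    refine idZeroOfEpsZero k Y ?_
    exact InducedCategory.hom_ext (wle_wge_orth w (by omega) (hWleMem k Y) hY ((ε k).app Y).hom)
  -- if `W_{≤ k} Y ∈ C^{w ≤ k-1}` then `Gr_k Y = 0`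
  have grZero_of : ∀ (k : ℤ) (Y : Heart t), ((Wle k).obj Y).obj ∈ w.wle (k - 1) →
      IsZero ((Wge k).obj ((Wle k).obj Y)) := by
    intro k Y h
    obtain ⟨-, -, -, h3, hdt⟩ := hWge k ((Wle k).obj Y)
    haveI : IsIso (homC ((ε (k - 1)).app ((Wle k).obj Y))) :=
      heartIsIso_to _ _ _ (epsIso (k - 1) ((Wle k).obj Y) h)
    exact heartIsZero_of _ (Triangle.isZero₃_of_isIso₁ _ hdt this)
  -- if `Gr_k Y = 0` then `W_{≤ k} Y ∈ C^{w ≤ k-1}`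
  have memStep : ∀ (k : ℤ) (Y : Heart t), IsZero ((Wge k).obj ((Wle k).obj Y)) →
      ((Wle k).obj Y).obj ∈ w.wle (k - 1) := by
    intro k Y h
    obtain ⟨-, -, -, h3, hdt⟩ := hWge k ((Wle k).obj Y)
    have hz : IsZero ((Triangle.mk (homC ((ε (k - 1)).app ((Wle k).obj Y)))
        (homC ((η k).app ((Wle k).obj Y))) h3).obj₃) := heartIsZero_to _ h
    haveI : IsIso (homC ((ε (k - 1)).app ((Wle k).obj Y))) :=
      Triangle.isZero₃_iff_isIso₁ _ hdt |>.1 hz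
    exact shiftClass_iso_closed (asIso (homC ((ε (k - 1)).app ((Wle k).obj Y))))
      (hWleMem (k - 1) ((Wle k).obj Y))
  constructor
  · constructor
    · -- X ∈ C^{w≤i} ⇒ Gr_j X = 0 for j > i
      intro hX j hj
      have hX' : X.obj ∈ w.wle (j - 1) := wle_mono_s7 w (by omega) hX
      have hX'' : X.obj ∈ w.wle j := wle_mono_s7 w (by omega) hX
      haveI := epsIso j X hX''
      have e : X.obj ≅ ((Wle j).obj X).obj :=
        ((ObjectProperty.ι _).mapIso (asIso ((ε j).app X))).symm
      exact grZero_of j X (shiftClass_iso_closed e hX')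
    · -- Gr_j X = 0 for all j > i ⇒ X ∈ C^{w≤i}
      intro hG
      obtain ⟨N, hN⟩ := w.bounded_le X.obj
      have claim : ∀ n : ℕ, ∀ j : ℤ, j ≤ i + n → X.obj ∈ w.wle j → X.obj ∈ w.wle i := by
        intro n
        induction n with
        | zero =>
          intro j hj hXj
          exact wle_mono_s7 w (by omega) hXj
        | succ n ih =>
          intro j hj hXj
          by_cases hj' : j ≤ i + n
          · exact ih j hj' hXj
          · have hij : i < j := by omega
            have hmem := memStep j X (hG j hij)
            haveI := epsIso j X hXj
            have e : X.obj ≅ ((Wle j).obj X).obj :=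
              ((ObjectProperty.ι _).mapIso (asIso ((ε j).app X))).symm
            have : X.obj ∈ w.wle (j - 1) := shiftClass_iso_closed e.symm hmem
            exact ih (j - 1) (by omega) this
      exact claim (N - i).toNat N (by omega) hN
  · constructor
    · -- X ∈ C^{w≥i} ⇒ Gr_j X = 0 for j < i
      intro hX j hj
      have hX' : X.obj ∈ w.wge (j + 1) := wge_anti_s7 w (by omega) hX
      have hz := zeroWle j X hX'
      exact grZero_of j X (isZero_mem_wle w (j - 1) (heartIsZero_to _ hz))
    · -- Gr_j X = 0 for all j < i ⇒ X ∈ C^{w≥i}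
      intro hG
      obtain ⟨M, hM⟩ := w.bounded_ge X.obj
      have claim : ∀ n : ℕ, ∀ j : ℤ, j ≤ M - 1 + n → j ≤ i - 1 →
          IsZero ((Wle j).obj X) := by
        intro n
        induction n with
        | zero =>
          intro j hj _
          exact zeroWle j X (wge_anti_s7 w (by omega) hM)
        | succ n ih =>
          intro j hj hji
          by_cases hj' : j ≤ M - 1 + n
          · exact ih j hj' hji
          · have hmem := memStep j X (hG j (by omega))
            have hprev : IsZero ((Wle (j - 1)).obj X) := ih (j - 1) (by omega) (by omega)
            obtain ⟨g, hg, -⟩ := hWleAdj (j - 1) ((Wle j).obj X) X hmem ((ε j).app X)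
            have hz : (ε j).app X = 0 := by
              rw [← hg, hprev.eq_of_tgt g 0, zero_comp]
            exact idZeroOfEpsZero j X hz
      have hz1 : IsZero ((Wle (i - 1)).obj X) :=
        claim (i - M).toNat (i - 1) (by omega) (by omega)
      obtain ⟨A, B, f, g, h, hdt, hA, hB, hAh, hXh, hBh⟩ := h4 X.obj X.property (i - 1)
      have hB' : B ∈ w.wge i := wge_anti_s7 w (by omega) hB
      obtain ⟨g₀, hg₀, -⟩ := hWleAdj (i - 1) ⟨A, hAh⟩ X hA (ObjectProperty.homMk f : (⟨A, hAh⟩ : Heart t) ⟶ X)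
      have hf0 : f = 0 := by
        have : g₀ = 0 := hz1.eq_of_tgt g₀ 0
        have h' : (g₀ ≫ (ε (i - 1)).app X).hom = f := by rw [hg₀]; rfl
        rw [this, zero_comp] at h'
        exact h'.symm
      obtain ⟨r, hr⟩ := Triangle.yoneda_exact₂ _ hdt (𝟙 X.obj) (by change f ≫ 𝟙 X.obj = 0; rw [hf0]; exact zero_comp)
      exact wge_retract w ⟨g, r, hr.symm⟩ hB'

end WT
end

section
/- Let C be a pretriangulated category, A an abelian category, and H, W : C → A homological functors (additive functors sending every distinguished triangle X → Y → Z → X[1] to an exact sequence H(X) → H(Y) → H(Z)). Let ι : W ⟶ H be a natural transformation all of whose components ι_X : W(X) → H(X) are monomorphisms. Then for every morphism f : X → Y of C, one has the following equality of subobjects of H(Y): the image of the composite ι_Y ∘ W(f) equals the intersection (pullback) of the image of ι_Y with the image of H(f). (In particular, morphisms are strictly compatible with the filtration of H given by W.) -/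
open CategoryTheory CategoryTheory.Limits CategoryTheory.Pretriangulated

universe v u

namespace WT

variable (C : Type u) [Category.{v} C] [Preadditive C] [HasZeroObject C]
  [HasShift C ℤ] [∀ n : ℤ, (shiftFunctor C n).Additive] [Pretriangulated C]

/-- A homological functor: an additive functor sending distinguished triangles to
exact sequences. -/
def IsHomologicalFunctor {A : Type*} [Category A] [Abelian A] (H : C ⥤ A) : Prop :=
  H.Additive ∧ ∀ T ∈ (distTriang C), ∃ h0 : H.map T.mor₁ ≫ H.map T.mor₂ = 0,
    (ShortComplex.mk (H.map T.mor₁) (H.map T.mor₂) h0).Exact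

/-- Auxiliary: in an abelian category, if `(f, g)` is an exact complex, any morphism
`k` with `k ≫ g = 0` factors through the image of `f`. -/
lemma exact_lift_to_image {A : Type*} [Category A] [Abelian A] {X₁ X₂ X₃ : A}
    {f : X₁ ⟶ X₂} {g : X₂ ⟶ X₃} {w : f ≫ g = 0}
    (hex : (ShortComplex.mk f g w).Exact)
    {P : A} (k : P ⟶ X₂) (hk : k ≫ g = 0) :
    ∃ l : P ⟶ Limits.image f, l ≫ Limits.image.ι f = k := by
  set S := ShortComplex.mk f g w with hS
  have hz : kernel.ι S.g ≫ cokernel.π S.f = 0 :=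
    (S.exact_iff_kernel_ι_comp_cokernel_π_zero).1 hex
  let k' : P ⟶ kernel S.g := kernel.lift S.g k hk
  have hk' : k' ≫ (kernel.ι S.g ≫ cokernel.π S.f) = 0 := by rw [hz, comp_zero]
  obtain ⟨l₀, hl₀⟩ := KernelFork.IsLimit.lift' S.abelianImageToKernelIsKernel k' hk'
  rw [Fork.ι_ofι] at hl₀
  refine ⟨l₀ ≫ (Abelian.imageIsoImage S.f).hom, ?_⟩
  have h1 : (Abelian.imageIsoImage S.f).hom ≫ Limits.image.ι S.f =
      kernel.ι (cokernel.π S.f) := Abelian.imageIsoImage_hom_comp_image_ι S.f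
  have h2 : l₀ ≫ Abelian.image.ι S.f = k := by
    have := S.abelianImageToKernel_comp_kernel_ι
    rw [show Abelian.image.ι S.f = S.abelianImageToKernel ≫ kernel.ι S.g from this.symm,
      ← Category.assoc, hl₀]
    simp [k']
  rw [Category.assoc, h1]
  exact h2

/-- Proposition 3.2(II2), key strictness assertion: if `W ⟶ H` is a monomorphism of
homological functors, then for any `f : X ⟶ Y` the image of `W(f)` composed with
`ι_Y` equals the intersection of the image of `ι_Y` with the image of `H(f)`:
morphisms are strictly compatible with the filtration of `H` by `W`. -/
theorem strict_compatibility_of_filtration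
    (A : Type*) [Category A] [Abelian A]
    (H W : C ⥤ A) (hH : IsHomologicalFunctor C H) (hW : IsHomologicalFunctor C W)
    (ι : W ⟶ H) (hmono : ∀ X : C, Mono (ι.app X))
    (X Y : C) (f : X ⟶ Y) :
    imageSubobject (W.map f ≫ ι.app Y) =
      imageSubobject (ι.app Y) ⊓ imageSubobject (H.map f) := by
  haveI := hmono X; haveI := hmono Y
  have hnat : W.map f ≫ ι.app Y = ι.app X ≫ H.map f := ι.naturality f
  obtain ⟨Z, g, h, hT⟩ := Pretriangulated.distinguished_cocone_triangle f
  haveI := hmono Z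
  obtain ⟨hH0, hHex⟩ := hH.2 _ hT
  obtain ⟨hW0, hWex⟩ := hW.2 _ hT
  dsimp only [Triangle.mk] at hH0 hHex hW0 hWex
  -- here the triangle maps are `f : X ⟶ Y` and `g : Y ⟶ Z`
  apply le_antisymm
  · refine le_inf (imageSubobject_comp_le _ _) ?_
    rw [hnat]
    exact imageSubobject_comp_le _ _
  · -- the hard direction
    set P : Subobject (H.obj Y) := imageSubobject (ι.app Y) ⊓ imageSubobject (H.map f)
      with hP
    -- `P.arrow` factors through `ι.app Y`
    let k : (P : A) ⟶ W.obj Y :=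
      Subobject.ofLE _ _ (inf_le_left (b := imageSubobject (H.map f))) ≫
        (imageSubobjectIso (ι.app Y)).hom ≫ (imageMonoIsoSource (ι.app Y)).hom
    have hkι : k ≫ ι.app Y = P.arrow := by
      simp only [k, Category.assoc, imageMonoIsoSource_hom_self]
      rw [imageSubobject_arrow, Subobject.ofLE_arrow]
    -- `P.arrow` is killed by `H.map g`
    have harrg : P.arrow ≫ H.map g = 0 := by
      rw [← Subobject.ofLE_arrow (h := inf_le_right (a := imageSubobject (ι.app Y))),
        Category.assoc, imageSubobject_arrow_comp_eq_zero hH0, comp_zero]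
    -- hence `k` is killed by `W.map g`
    have hkg : k ≫ W.map g = 0 := by
      rw [← cancel_mono (ι.app Z), Category.assoc, ι.naturality g, ← Category.assoc,
        hkι, harrg, zero_comp]
    -- by exactness of `W(X) → W(Y) → W(Z)`, `k` factors through the image of `W.map f`
    obtain ⟨l, hl⟩ := exact_lift_to_image hWex k hkg
    -- `image (W.map f) ⟶ H.obj Y` is an image factorisation of `W.map f ≫ ι.app Y`
    let F' : MonoFactorisation (W.map f ≫ ι.app Y) :=
      { I := Limits.image (W.map f)
        m := Limits.image.ι (W.map f) ≫ ι.app Y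
        e := Limits.factorThruImage (W.map f)
        fac := by rw [← Category.assoc, Limits.image.fac] }
    haveI : StrongEpi F'.e := strongEpi_of_epi _
    let F'' : StrongEpiMonoFactorisation (W.map f ≫ ι.app Y) :=
      { toMonoFactorisation := F' }
    have hF' : IsImage F' := F''.toMonoIsImage
    let eIso : Limits.image (W.map f ≫ ι.app Y) ≅ Limits.image (W.map f) :=
      IsImage.isoExt (Image.isImage (W.map f ≫ ι.app Y)) hF'
    have heIso : eIso.inv ≫ Limits.image.ι (W.map f ≫ ι.app Y) =
        Limits.image.ι (W.map f) ≫ ι.app Y :=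
      IsImage.isoExt_inv_m (Image.isImage (W.map f ≫ ι.app Y)) hF'
    refine Subobject.le_of_comm
      (l ≫ eIso.inv ≫ (imageSubobjectIso (W.map f ≫ ι.app Y)).inv) ?_
    rw [Category.assoc, Category.assoc, imageSubobject_arrow', heIso,
      ← Category.assoc, hl, hkι]

end WT
end

section
/- Let C be a triangulated category, and let T : X → A → B → X[1] and T' : X' → A' → B' → X'[1] be distinguished triangles such that Hom_C(B, A'[1]) = 0. Then any morphism g : X → X' can be completed to a morphism of triangles, i.e. there exist h : A → A' and i : B → B' such that (g, h, i) commutes with all the maps of T and T'. Moreover, if in addition Hom_C(B, A') = 0, then h is uniquely determined by g. -/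
open CategoryTheory CategoryTheory.Limits CategoryTheory.Pretriangulated

universe v u

namespace WT

variable (C : Type u) [Category.{v} C] [Preadditive C] [HasZeroObject C]
  [HasShift C ℤ] [∀ n : ℤ, (shiftFunctor C n).Additive] [Pretriangulated C]

/-- Lemma 1.1(1): given distinguished triangles `T : X → A → B → X⟦1⟧` and
`T' : X' → A' → B' → X'⟦1⟧` with `Hom(B, A'⟦1⟧) = 0`, any morphism `g : X ⟶ X'`
extends to a morphism of triangles; if moreover `Hom(B, A') = 0`, the middle
component `h` is uniquely determined by `g`. -/
theorem extend_morphism_of_triangles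
    (X A B X' A' B' : C) (a : X ⟶ A) (f : A ⟶ B) (b : B ⟶ (X⟦(1 : ℤ)⟧ : C))
    (a' : X' ⟶ A') (f' : A' ⟶ B') (b' : B' ⟶ (X'⟦(1 : ℤ)⟧ : C))
    (hT : Triangle.mk a f b ∈ (distTriang C))
    (hT' : Triangle.mk a' f' b' ∈ (distTriang C))
    (horth : ∀ φ : B ⟶ ((A'⟦(1 : ℤ)⟧ : C)), φ = 0) (g : X ⟶ X') :
    (∃ (h : A ⟶ A') (i : B ⟶ B'),
      a ≫ h = g ≫ a' ∧ f ≫ i = h ≫ f' ∧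
        b ≫ (shiftFunctor C (1 : ℤ)).map g = i ≫ b') ∧
    ((∀ φ : B ⟶ A', φ = 0) → ∀ h₁ h₂ : A ⟶ A',
      (∃ i₁ : B ⟶ B', a ≫ h₁ = g ≫ a' ∧ f ≫ i₁ = h₁ ≫ f' ∧
        b ≫ (shiftFunctor C (1 : ℤ)).map g = i₁ ≫ b') →
      (∃ i₂ : B ⟶ B', a ≫ h₂ = g ≫ a' ∧ f ≫ i₂ = h₂ ≫ f' ∧
        b ≫ (shiftFunctor C (1 : ℤ)).map g = i₂ ≫ b') →
      h₁ = h₂) := by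
  constructor
  · -- existence
    have hzero : ∀ ψ : ((B⟦(-1 : ℤ)⟧ : C) ⟶ A'), ψ = 0 := by
      intro ψ
      apply (shiftFunctor C (1 : ℤ)).map_injective
      rw [Functor.map_zero]
      have h1 : (shiftFunctorCompIsoId C (-1 : ℤ) (1 : ℤ) (by ring)).inv.app B ≫
          (shiftFunctor C (1 : ℤ)).map ψ = 0 := horth _
      calc (shiftFunctor C (1 : ℤ)).map ψ
          = (shiftFunctorCompIsoId C (-1 : ℤ) (1 : ℤ) (by ring)).hom.app B ≫
            ((shiftFunctorCompIsoId C (-1 : ℤ) (1 : ℤ) (by ring)).inv.app B ≫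
              (shiftFunctor C (1 : ℤ)).map ψ) := by simp
        _ = 0 := by rw [h1, comp_zero]
    obtain ⟨h, hh⟩ := Triangle.yoneda_exact₂ _
      (inv_rot_of_distTriang _ hT) (g ≫ a') (hzero _)
    obtain ⟨i, hi₁, hi₂⟩ := complete_distinguished_triangle_morphism _ _ hT hT' g h hh.symm
    exact ⟨h, i, hh.symm, hi₁, hi₂⟩
  · -- uniqueness
    intro hBA' h₁ h₂ ⟨i₁, e₁, _, _⟩ ⟨i₂, e₂, _, _⟩
    have hdiff : a ≫ (h₁ - h₂) = 0 := by
      rw [Preadditive.comp_sub, e₁, e₂, sub_self]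
    obtain ⟨φ, hφ⟩ := Triangle.yoneda_exact₂ _ hT (h₁ - h₂) hdiff
    have : h₁ - h₂ = 0 := by rw [hφ, hBA' φ]; exact comp_zero
    exact sub_eq_zero.mp this

end WT
end

section
/- Let C be a triangulated category and (A_s)_{s∈ℤ} a semi-orthogonal family of full additive subcategories of C. For each s let C_s denote the smallest strictly full triangulated subcategory of C containing A_s. Then C_j ⊥ C_i for all i > j, i.e. Hom_C(X, Y) = 0 for all objects X of C_j and Y of C_i whenever i > j. -/
open CategoryTheory CategoryTheory.Limits CategoryTheory.Pretriangulated

universe v u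

namespace WT

variable (C : Type u) [Category.{v} C] [Preadditive C] [HasZeroObject C]
  [HasShift C ℤ] [∀ n : ℤ, (shiftFunctor C n).Additive] [Pretriangulated C]

/-- Full orthogonality: every map `X ⟶ Y⟦n⟧` vanishes, for every `n`. -/
def FullPerp (X Y : C) : Prop :=
  ∀ n : ℤ, ∀ f : X ⟶ (Y⟦n⟧ : C), f = 0

variable {C}

/-- The right full-orthogonal of a class is a triangulated class. -/
lemma rightPerp_triangulated (D : Set C) :
    IsTriangulatedClass C {Y : C | ∀ X ∈ D, FullPerp C X Y} := by
  constructor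
  · rintro Y Y' e hY X hX n f
    have h : f ≫ (shiftFunctor C n).map e.inv = 0 := hY X hX n _
    have : f = (f ≫ (shiftFunctor C n).map e.inv) ≫ (shiftFunctor C n).map e.hom := by
      simp [← Functor.map_comp]
    rw [this, h, zero_comp]
  · intro m Y hY X hX n f
    have h : f ≫ ((shiftFunctorAdd C m n).app Y).inv = 0 := hY X hX (m + n) _
    have : f = (f ≫ ((shiftFunctorAdd C m n).app Y).inv) ≫
        ((shiftFunctorAdd C m n).app Y).hom := by simp
    rw [this, h, zero_comp]
  · intro T hT h₁ h₃ X hX n f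
    have hT' := Pretriangulated.Triangle.shift_distinguished T hT n
    have hf : f ≫ ((CategoryTheory.shiftFunctor (Triangle C) n).obj T).mor₂ = 0 :=
      h₃ X hX n _
    obtain ⟨g, hg⟩ := Pretriangulated.Triangle.coyoneda_exact₂ _ hT' f hf
    have : g = 0 := h₁ X hX n g
    rw [hg, this, zero_comp]
    rfl

/-- The left full-orthogonal of a class is a triangulated class. -/
lemma leftPerp_triangulated (E : Set C) :
    IsTriangulatedClass C {X : C | ∀ Y ∈ E, FullPerp C X Y} := by
  constructor
  · rintro X X' e hX Y hY n f
    have h : e.hom ≫ f = 0 := hX Y hY n _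
    have : f = e.inv ≫ (e.hom ≫ f) := by simp
    rw [this, h, comp_zero]
  · intro m X hX Y hY n f
    -- `f : X⟦m⟧ ⟶ Y⟦n⟧`; apply the shift by `-m`.
    have hfaith : Function.Injective ((shiftFunctor C (-m)).map
        (X := (X⟦m⟧ : C)) (Y := (Y⟦n⟧ : C))) := (shiftFunctor C (-m)).map_injective
    apply hfaith
    rw [Functor.map_zero]
    have h0 : (shiftFunctorCompIsoId C m (-m) (by ring)).inv.app X ≫
        (shiftFunctor C (-m)).map f ≫
        ((shiftFunctorAdd' C n (-m) (n - m) (by ring)).app Y).inv = 0 :=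
      hX Y hY (n - m) _
    have : (shiftFunctor C (-m)).map f =
        (shiftFunctorCompIsoId C m (-m) (by ring)).hom.app X ≫
        ((shiftFunctorCompIsoId C m (-m) (by ring)).inv.app X ≫
          (shiftFunctor C (-m)).map f ≫
          ((shiftFunctorAdd' C n (-m) (n - m) (by ring)).app Y).inv) ≫
        ((shiftFunctorAdd' C n (-m) (n - m) (by ring)).app Y).hom := by simp
    rw [this, h0, zero_comp, comp_zero]
  · intro T hT h₁ h₃ Y hY n f
    have hf : T.mor₁ ≫ f = 0 := h₁ Y hY n _
    obtain ⟨g, hg⟩ := Pretriangulated.Triangle.yoneda_exact₂ _ hT f hf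
    have : g = 0 := h₃ Y hY n g
    rw [hg, this, comp_zero]

variable (C)

/-- Lemma 1.4(I): for a semi-orthogonal family `(A s)`, the triangulated
subcategories `C_s` generated by the `A s` satisfy `C_j ⊥ C_i` for `i > j`. -/
theorem hull_semiorthogonal (A : ℤ → Set C) (hA : SemiOrthogonal C A) :
    ∀ i j : ℤ, j < i →
      Perp C (triangulatedHull C (A j)) (triangulatedHull C (A i)) := by
  intro i j hij X hX Y hY f
  -- Step 1: every `X₀ ∈ A j` is fully orthogonal to every `Y ∈ hull (A i)`.
  have step1 : ∀ X₀ ∈ A j, ∀ Y₀ ∈ triangulatedHull C (A i), FullPerp C X₀ Y₀ := by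
    intro X₀ hX₀ Y₀ hY₀
    refine hY₀ {Y : C | ∀ X ∈ A j, FullPerp C X Y} ⟨rightPerp_triangulated _, ?_⟩ X₀ hX₀
    intro Z hZ X' hX' n g
    exact hA j i n (by omega) hX' hZ g
  -- Step 2: every `X ∈ hull (A j)` is fully orthogonal to `Y`.
  have step2 : FullPerp C X Y := by
    refine hX {X' : C | ∀ Y' ∈ triangulatedHull C (A i), FullPerp C X' Y'}
      ⟨leftPerp_triangulated _, ?_⟩ Y hY
    intro Z hZ Y' hY'
    exact step1 Z hZ Y' hY'
  -- Conclude, using the shift by `0`.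
  have h0 : f ≫ ((shiftFunctorZero C ℤ).app Y).inv = 0 := step2 0 _
  have : f = (f ≫ ((shiftFunctorZero C ℤ).app Y).inv) ≫
      ((shiftFunctorZero C ℤ).app Y).hom := by simp
  rw [this, h0, zero_comp]

end WT
end
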